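/- Let x, z be grid states with |x \ (x∩z)| = 4 and let ψ ∈ π(x,z) be a domain admitting a decomposition ψ = r₁ * r₂ into two rectangles (with any intermediate state), not both long. Then ψ admits exactly two such decompositions, and the two decompositions have the same degree, where the degree of a decomposition is T(r₁) + T(r₂). -/

import Mathlib

/-- A (possibly long) rectangle on the `n × n` grid torus, described in the universal
cover `ℝ²` (with the grid torus `= ℝ²/(nℤ)²`) by the box `[A, B) × [C, D)`:
columns `[A, B)`, rows `[C, D)`. -/
structure CRect where
  A : ℤ
  B : ℤ
  C : ℤ
  D : ℤ
deriving DecidableEq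

/-- The multiplicity of the projection of the box to the torus at the square `p`
(column `p.1`, row `p.2`). -/
noncomputable def CRect.mult (n : ℕ) (R : CRect) (p : ZMod n × ZMod n) : ℤ :=
  ((((Finset.Ico R.A R.B).filter (fun u : ℤ => (u : ZMod n) = p.1)).card : ℤ) *
   (((Finset.Ico R.C R.D).filter (fun v : ℤ => (v : ZMod n) = p.2)).card : ℤ))

/-- The grid state obtained from `x` by moving the two points of `x` at the SW and NE
corners of `R` to the other two corners of `R`. -/
def CRect.target (n : ℕ) (R : CRect) (x : Equiv.Perm (ZMod n)) : Equiv.Perm (ZMod n) :=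
  x.trans (Equiv.swap ((R.C : ZMod n)) ((R.D : ZMod n)))

/-- `R` connects the grid state `x` to the grid state `y`: the SW and NE corners of `R`
are points of `x`, the other two corners are points of `y`, and `x`, `y` agree elsewhere. -/
def CRect.Connects (n : ℕ) (R : CRect) (x y : Equiv.Perm (ZMod n)) : Prop :=
  ((R.A : ZMod n) ≠ (R.B : ZMod n)) ∧
  x ((R.A : ZMod n)) = (R.C : ZMod n) ∧
  x ((R.B : ZMod n)) = (R.D : ZMod n) ∧
  y = R.target n x

/-- An ordinary (embedded) rectangle. -/
def CRect.IsOrd (n : ℕ) (R : CRect) : Prop :=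
  0 < R.B - R.A ∧ R.B - R.A < (n : ℤ) ∧ 0 < R.D - R.C ∧ R.D - R.C < (n : ℤ)

/-- A long rectangle: it has width one and wraps once around the torus, so it has
local multiplicity `2` somewhere and local multiplicity `1` somewhere. -/
def CRect.IsLong (n : ℕ) (R : CRect) : Prop :=
  (R.B - R.A = 1 ∧ (n : ℤ) < R.D - R.C ∧ R.D - R.C < 2 * (n : ℤ)) ∨
  (R.D - R.C = 1 ∧ (n : ℤ) < R.B - R.A ∧ R.B - R.A < 2 * (n : ℤ))

/-- A normalized choice of lift: the SW corner lies in the fundamental domain, so each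
rectangle on the torus is described by exactly one normalized box. -/
def CRect.Normalized (n : ℕ) (R : CRect) : Prop :=
  0 ≤ R.A ∧ R.A < (n : ℤ) ∧ 0 ≤ R.C ∧ R.C < (n : ℤ)

/-- `R` is a (possibly long) rectangle from the grid state `x` to the grid state `y`. -/
def CRect.IsRect (n : ℕ) (R : CRect) (x y : Equiv.Perm (ZMod n)) : Prop :=
  R.Normalized n ∧ (R.IsOrd n ∨ R.IsLong n) ∧ R.Connects n x y

/-- The number of points of the grid state `x` in the interior of `R`
(counted with multiplicity). -/
noncomputable def CRect.intCount (n : ℕ) (R : CRect) (x : Equiv.Perm (ZMod n)) : ℕ :=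
  (((Finset.Ioo R.A R.B) ×ˢ (Finset.Ioo R.C R.D)).filter
    (fun q : ℤ × ℤ => x ((q.1 : ZMod n)) = (q.2 : ZMod n))).card

open Classical in
/-- `T(r) = 1` if `r` is long, and `T(r) = |Int(r) ∩ x|` otherwise. -/
noncomputable def CRect.T (n : ℕ) (R : CRect) (x : Equiv.Perm (ZMod n)) : ℕ :=
  if R.IsLong n then 1 else R.intCount n x

/-- A decomposition `ψ = r₁ * r₂` of the domain `ψ ∈ π(x, z)` as a juxtaposition of two
(possibly long) rectangles, not both long, through an intermediate grid state `y`,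
with multiplicities adding pointwise. -/
structure Decomp (n : ℕ) (ψ : ZMod n × ZMod n → ℤ) (x z : Equiv.Perm (ZMod n)) where
  y : Equiv.Perm (ZMod n)
  R₁ : CRect
  R₂ : CRect
  h₁ : R₁.IsRect n x y
  h₂ : R₂.IsRect n y z
  notboth : ¬(R₁.IsLong n ∧ R₂.IsLong n)
  hsum : ∀ p, ψ p = R₁.mult n p + R₂.mult n p

/-- The degree `T(r₁) + T(r₂)` of a decomposition. -/
noncomputable def Decomp.deg {n : ℕ} {ψ : ZMod n × ZMod n → ℤ} {x z : Equiv.Perm (ZMod n)}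
    (d : Decomp n ψ x z) : ℕ :=
  d.R₁.T n x + d.R₂.T n d.y


namespace S6

lemma npos (n : ℕ) [NeZero n] : 0 < (n : ℤ) := by
  exact_mod_cast Nat.pos_of_ne_zero (NeZero.ne n)

lemma cast_eq_iff (n : ℕ) (u v : ℤ) : ((u : ZMod n) = (v : ZMod n)) ↔ (n : ℤ) ∣ v - u := by
  rw [ZMod.intCast_eq_intCast_iff, Int.modEq_iff_dvd]

lemma dvd_small (n u : ℤ) (hn : 0 < n) (h : n ∣ u) (h1 : -3*n < u) (h2 : u < 3*n) :
    u = -2*n ∨ u = -n ∨ u = 0 ∨ u = n ∨ u = 2*n := by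
  obtain ⟨k, rfl⟩ := h
  have hk1 : -3 < k := by
    by_contra hc
    push_neg at hc
    nlinarith
  have hk2 : k < 3 := by
    by_contra hc
    push_neg at hc
    nlinarith
  interval_cases k <;> omega

lemma card_filter_Ico (n : ℕ) [NeZero n] (A B t : ℤ) (hA : 0 ≤ A) (hAn : A ≤ n)
    (hB : B ≤ A + 2*n) (ht : 0 ≤ t) (htn : t < n) :
    (((Finset.Ico A B).filter (fun u : ℤ => (u : ZMod n) = (t : ZMod n))).card : ℤ) =
    (if A ≤ t ∧ t < B then 1 else 0) + (if A ≤ t + n ∧ t + n < B then 1 else 0)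
      + (if A ≤ t + 2*n ∧ t + 2*n < B then 1 else 0) := by
  have hn := npos n
  have hset : (Finset.Ico A B).filter (fun u : ℤ => (u : ZMod n) = (t : ZMod n)) =
      ({t, t + n, t + 2*n} : Finset ℤ).filter (fun u => A ≤ u ∧ u < B) := by
    ext u
    simp only [Finset.mem_filter, Finset.mem_Ico, Finset.mem_insert, Finset.mem_singleton]
    constructor
    · rintro ⟨⟨h1, h2⟩, hc⟩
      have hd : (n : ℤ) ∣ t - u := (cast_eq_iff n u t).mp hc
      have := dvd_small (n : ℤ) (t - u) hn hd (by omega) (by omega)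
      omega
    · rintro ⟨h1, h2, h3⟩
      refine ⟨⟨by omega, by omega⟩, ?_⟩
      rcases h1 with rfl | rfl | rfl
      · rfl
      · push_cast [ZMod.natCast_self]; ring
      · push_cast [ZMod.natCast_self]; ring
  rw [hset]
  rw [Finset.filter_insert, Finset.filter_insert, Finset.filter_singleton]
  have e1 : t ≠ t + n := by omega
  have e2 : t ≠ t + 2*n := by omega
  have e3 : t + n ≠ t + 2*n := by omega
  split_ifs <;>
    simp_all [Finset.card_insert_of_notMem, Finset.mem_insert, Finset.mem_singleton] <;>
    omega

end S6

namespace S6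

def Xa (n a w t : ℤ) : ℤ :=
  (if a ≤ t ∧ t < a + w then 1 else 0) + (if t + n < a + w then 1 else 0)

def Ob (n A B t : ℤ) : ℤ :=
  (if A < t ∧ t < B then 1 else 0) + (if A < t + n ∧ t + n < B then 1 else 0)

lemma Xa_self (n a w : ℤ) (h1 : 0 < w) (h2 : w ≤ n) : Xa n a w a = 1 := by
  unfold Xa; split_ifs <;> omega

lemma Xa_end (n a w b : ℤ) (h1 : 0 < w) (h2 : w < n)
    (hb : b = a + w ∨ b = a + w - n) (hb0 : 0 ≤ b) (hbn : b < n) : Xa n a w b = 0 := by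
  unfold Xa; split_ifs <;> omega

lemma Xa_bound (n a w t : ℤ) (h1 : 0 < w) (h2 : w < n) (ht : 0 ≤ t) (htn : t < n)
    (ha : 0 ≤ a) (han : a < n) : 0 ≤ Xa n a w t ∧ Xa n a w t ≤ 1 := by
  unfold Xa; split_ifs <;> omega

lemma Xa_compl (n a w a' t : ℤ) (h1 : 0 < w) (h2 : w < n) (ha : 0 ≤ a) (han : a < n)
    (ha' : a' = a + w ∨ a' = a + w - n) (ha'0 : 0 ≤ a') (ha'n : a' < n)
    (ht : 0 ≤ t) (htn : t < n) :
    Xa n a' (n - w) t = 1 - Xa n a w t := by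
  unfold Xa; split_ifs <;> omega

lemma Xa_link (n a1 w1 b1 a2 w2 b2 : ℤ)
    (ha1 : 0 ≤ a1) (ha1n : a1 < n) (hw1 : 0 < w1) (hw1n : w1 < n)
    (hb1 : b1 = a1 + w1 ∨ b1 = a1 + w1 - n) (hb10 : 0 ≤ b1) (hb1n : b1 < n)
    (ha2 : 0 ≤ a2) (ha2n : a2 < n) (hw2 : 0 < w2) (hw2n : w2 < n)
    (hb2 : b2 = a2 + w2 ∨ b2 = a2 + w2 - n) (hb20 : 0 ≤ b2) (hb2n : b2 < n)
    (d1 : a1 ≠ a2) (d2 : a1 ≠ b2) (d3 : b1 ≠ a2) (d4 : b1 ≠ b2) :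
    Xa n a1 w1 a2 - Xa n a1 w1 b2 = -(Xa n a2 w2 a1 - Xa n a2 w2 b1) := by
  unfold Xa; split_ifs <;> omega

lemma Ob_link (n A1 w1 b1 A2 w2 b2 : ℤ)
    (ha1 : 0 ≤ A1) (ha1n : A1 < n) (hw1 : 0 < w1) (hw1n : w1 < n)
    (hb1 : b1 = A1 + w1 ∨ b1 = A1 + w1 - n) (hb10 : 0 ≤ b1) (hb1n : b1 < n)
    (ha2 : 0 ≤ A2) (ha2n : A2 < n) (hw2 : 0 < w2) (hw2n : w2 < n)
    (hb2 : b2 = A2 + w2 ∨ b2 = A2 + w2 - n) (hb20 : 0 ≤ b2) (hb2n : b2 < n)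
    (d1 : A1 ≠ A2) (d2 : A1 ≠ b2) (d3 : b1 ≠ A2) (d4 : b1 ≠ b2) :
    Ob n A2 (A2 + w2) A1 - Ob n A2 (A2 + w2) b1
      = -(Ob n A1 (A1 + w1) A2 - Ob n A1 (A1 + w1) b2) := by
  unfold Ob; split_ifs <;> omega

lemma Ob_adj (n A B b t t' : ℤ) (hA : 0 ≤ A) (hAn : A < n) (hw : 0 < B - A) (hwn : B - A < n)
    (hb : b = B ∨ b = B - n) (hb0 : 0 ≤ b) (hbn : b < n)
    (ht : 0 ≤ t) (htn : t < n) (ht' : 0 ≤ t') (ht'n : t' < n)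
    (hadj : t' = t + 1 ∨ t' = t + 1 - n) (hne1 : t ≠ A) (hne2 : t' ≠ b) :
    Ob n A B t = Ob n A B t' := by
  unfold Ob; split_ifs <;> omega

lemma card_filter_Ioo (n : ℕ) [NeZero n] (A B t : ℤ) (hA : 0 ≤ A) (hAn : A < n)
    (hB : B ≤ A + n) (ht : 0 ≤ t) (htn : t < n) :
    (((Finset.Ioo A B).filter (fun u : ℤ => (u : ZMod n) = (t : ZMod n))).card : ℤ) =
    Ob (n : ℤ) A B t := by
  have hIoo : Finset.Ioo A B = Finset.Ico (A+1) B := by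
    ext u; simp only [Finset.mem_Ioo, Finset.mem_Ico]; omega
  rw [hIoo, card_filter_Ico n (A+1) B t (by omega) (by omega) (by omega) ht htn]
  unfold Ob; split_ifs <;> omega

end S6

namespace S6

variable (n : ℕ)

/-- base width -/
def bw (R : CRect) : ℤ := if R.B - R.A ≤ (n:ℤ) then R.B - R.A else R.B - R.A - n
/-- horizontal-long bit (wide rectangle wrapping horizontally) -/
def lb (R : CRect) : ℤ := if (n:ℤ) < R.B - R.A then 1 else 0
/-- base height -/
def bh (R : CRect) : ℤ := if R.D - R.C ≤ (n:ℤ) then R.D - R.C else R.D - R.C - n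
/-- vertical-long bit -/
def mb (R : CRect) : ℤ := if (n:ℤ) < R.D - R.C then 1 else 0
/-- normalized lift of the east column -/
def bhat (R : CRect) : ℤ := if R.A + bw n R < (n:ℤ) then R.A + bw n R else R.A + bw n R - n
/-- normalized lift of the north row -/
def dhat (R : CRect) : ℤ := if R.C + bh n R < (n:ℤ) then R.C + bh n R else R.C + bh n R - n

variable [NeZero n]

lemma shape_spec (R : CRect) (hS : R.IsOrd n ∨ R.IsLong n) :
    0 < bw n R ∧ bw n R < n ∧ 0 < bh n R ∧ bh n R < n ∧
    ((lb n R = 0 ∧ R.B - R.A = bw n R) ∨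
      (lb n R = 1 ∧ R.B - R.A = bw n R + n ∧ bh n R = 1 ∧ mb n R = 0)) ∧
    ((mb n R = 0 ∧ R.D - R.C = bh n R) ∨
      (mb n R = 1 ∧ R.D - R.C = bh n R + n ∧ bw n R = 1 ∧ lb n R = 0)) := by
  have hn := npos n
  unfold CRect.IsOrd CRect.IsLong at hS
  unfold bw bh lb mb
  split_ifs <;> omega

lemma isLong_iff (R : CRect) (hS : R.IsOrd n ∨ R.IsLong n) :
    R.IsLong n ↔ lb n R + mb n R = 1 := by
  have hn := npos n
  unfold CRect.IsOrd CRect.IsLong at *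
  unfold lb mb
  split_ifs <;> omega

lemma bhat_res (R : CRect) (hS : R.IsOrd n ∨ R.IsLong n) :
    ((bhat n R : ℤ) : ZMod n) = ((R.B : ℤ) : ZMod n) := by
  have hn := npos n
  obtain ⟨h1, h2, h3, h4, h5, h6⟩ := shape_spec n R hS
  have : bhat n R = R.B ∨ bhat n R = R.B - n ∨ bhat n R = R.B - 2*n := by
    unfold bhat; split_ifs <;> omega
  rcases this with h | h | h <;> rw [h] <;> push_cast [ZMod.natCast_self] <;> ring

lemma dhat_res (R : CRect) (hS : R.IsOrd n ∨ R.IsLong n) :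
    ((dhat n R : ℤ) : ZMod n) = ((R.D : ℤ) : ZMod n) := by
  have hn := npos n
  obtain ⟨h1, h2, h3, h4, h5, h6⟩ := shape_spec n R hS
  have : dhat n R = R.D ∨ dhat n R = R.D - n ∨ dhat n R = R.D - 2*n := by
    unfold dhat; split_ifs <;> omega
  rcases this with h | h | h <;> rw [h] <;> push_cast [ZMod.natCast_self] <;> ring

lemma bhat_bounds (R : CRect) (hN : R.Normalized n) (hS : R.IsOrd n ∨ R.IsLong n) :
    0 ≤ bhat n R ∧ bhat n R < n ∧ (bhat n R = R.A + bw n R ∨ bhat n R = R.A + bw n R - n) := by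
  obtain ⟨h1, h2, h3, h4, h5, h6⟩ := shape_spec n R hS
  obtain ⟨g1, g2, g3, g4⟩ := hN
  unfold bhat; split_ifs <;> omega

lemma dhat_bounds (R : CRect) (hN : R.Normalized n) (hS : R.IsOrd n ∨ R.IsLong n) :
    0 ≤ dhat n R ∧ dhat n R < n ∧ (dhat n R = R.C + bh n R ∨ dhat n R = R.C + bh n R - n) := by
  obtain ⟨h1, h2, h3, h4, h5, h6⟩ := shape_spec n R hS
  obtain ⟨g1, g2, g3, g4⟩ := hN
  unfold dhat; split_ifs <;> omega

lemma mult_eq (R : CRect) (hN : R.Normalized n) (hS : R.IsOrd n ∨ R.IsLong n)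
    (t s : ℤ) (ht : 0 ≤ t) (htn : t < n) (hs : 0 ≤ s) (hsn : s < n) :
    R.mult n ((t : ZMod n), (s : ZMod n)) =
      (Xa n R.A (bw n R) t + lb n R) * (Xa n R.C (bh n R) s + mb n R) := by
  have hn := npos n
  obtain ⟨h1, h2, h3, h4, h5, h6⟩ := shape_spec n R hS
  obtain ⟨g1, g2, g3, g4⟩ := hN
  unfold CRect.mult
  rw [card_filter_Ico n R.A R.B t g1 (by omega) (by omega) ht htn,
      card_filter_Ico n R.C R.D s g3 (by omega) (by omega) hs hsn]
  have e1 : (if R.A ≤ t ∧ t < R.B then (1:ℤ) else 0) + (if R.A ≤ t + n ∧ t + n < R.B then 1 else 0)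
      + (if R.A ≤ t + 2*n ∧ t + 2*n < R.B then 1 else 0) = Xa n R.A (bw n R) t + lb n R := by
    unfold Xa; split_ifs <;> omega
  have e2 : (if R.C ≤ s ∧ s < R.D then (1:ℤ) else 0) + (if R.C ≤ s + n ∧ s + n < R.D then 1 else 0)
      + (if R.C ≤ s + 2*n ∧ s + 2*n < R.D then 1 else 0) = Xa n R.C (bh n R) s + mb n R := by
    unfold Xa; split_ifs <;> omega
  rw [e1, e2]

end S6

namespace S6

variable {n : ℕ} [NeZero n] {x z : Equiv.Perm (ZMod n)} {ψ : ZMod n × ZMod n → ℤ}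

/-- shorthands for the four moved values of a decomposition -/
def _root_.Decomp.c1 (g : Decomp n ψ x z) : ZMod n := ((g.R₁.C : ℤ) : ZMod n)
def _root_.Decomp.d1 (g : Decomp n ψ x z) : ZMod n := ((g.R₁.D : ℤ) : ZMod n)
def _root_.Decomp.c2 (g : Decomp n ψ x z) : ZMod n := ((g.R₂.C : ℤ) : ZMod n)
def _root_.Decomp.d2 (g : Decomp n ψ x z) : ZMod n := ((g.R₂.D : ℤ) : ZMod n)

lemma y_apply (g : Decomp n ψ x z) (i : ZMod n) :
    g.y i = Equiv.swap g.c1 g.d1 (x i) := by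
  have hy := g.h₁.2.2.2.2.2
  rw [hy]; rfl

lemma z_apply (g : Decomp n ψ x z) (i : ZMod n) :
    z i = Equiv.swap g.c2 g.d2 (Equiv.swap g.c1 g.d1 (x i)) := by
  have hz := g.h₂.2.2.2.2.2
  conv_lhs => rw [hz]
  show Equiv.swap g.c2 g.d2 (g.y i) = _
  rw [y_apply]

lemma sigma_eq (g : Decomp n ψ x z) (v : ZMod n) :
    z (x.symm v) = Equiv.swap g.c2 g.d2 (Equiv.swap g.c1 g.d1 v) := by
  rw [z_apply g, Equiv.apply_symm_apply]

lemma card3 {α : Type*} [DecidableEq α] (a b c : α) : ({a, b, c} : Finset α).card ≤ 3 := by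
  apply le_trans (Finset.card_insert_le _ _)
  have := Finset.card_insert_le b ({c} : Finset α)
  simp at this ⊢
  omega

lemma distinct4 (g : Decomp n ψ x z)
    (h4 : (Finset.univ.filter (fun i : ZMod n => x i ≠ z i)).card = 4) :
    g.c1 ≠ g.d1 ∧ g.c1 ≠ g.c2 ∧ g.c1 ≠ g.d2 ∧ g.d1 ≠ g.c2 ∧ g.d1 ≠ g.d2 ∧ g.c2 ≠ g.d2 := by
  classical
  set σ : ZMod n → ZMod n := fun v => Equiv.swap g.c2 g.d2 (Equiv.swap g.c1 g.d1 v) with hσ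
  have hz : ∀ i, z i = σ (x i) := fun i => z_apply g i
  have hcard : (Finset.univ.filter (fun v : ZMod n => v ≠ σ v)).card = 4 := by
    rw [← h4]
    apply Finset.card_bij (fun v _ => x.symm v)
    · intro v hv
      simp only [Finset.mem_filter, Finset.mem_univ, true_and] at hv ⊢
      rw [hz, Equiv.apply_symm_apply]
      exact fun h => hv h
    · intro v hv w hw h
      exact x.symm.injective h
    · intro i hi
      refine ⟨x i, ?_, by simp⟩
      simp only [Finset.mem_filter, Finset.mem_univ, true_and] at hi ⊢
      rw [hz] at hi
      exact fun h => hi h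
  have hsub : (Finset.univ.filter (fun v : ZMod n => v ≠ σ v)) ⊆ {g.c1, g.d1, g.c2, g.d2} := by
    intro v hv
    simp only [Finset.mem_filter, Finset.mem_univ, true_and] at hv
    simp only [Finset.mem_insert, Finset.mem_singleton]
    by_contra hc
    push_neg at hc
    obtain ⟨n1, n2, n3, n4⟩ := hc
    apply hv
    rw [hσ]
    simp only []
    rw [Equiv.swap_apply_of_ne_of_ne n1 n2, Equiv.swap_apply_of_ne_of_ne n3 n4]
  -- helper: any collapse gives a contradiction
  have key : ∀ a b c : ZMod n,
      (Finset.univ.filter (fun v : ZMod n => v ≠ σ v)) ⊆ {a, b, c} → False := by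
    intro a b c hab
    have h1 := Finset.card_le_card hab
    have h2 := card3 a b c
    omega
  have step : ∀ a b c : ZMod n, ({g.c1, g.d1, g.c2, g.d2} : Finset (ZMod n)) ⊆ {a, b, c} →
      False := by
    intro a b c hs2
    exact key a b c (hsub.trans hs2)
  refine ⟨fun h => step g.c1 g.c2 g.d2 ?_, fun h => step g.c1 g.d1 g.d2 ?_,
    fun h => step g.c1 g.d1 g.c2 ?_, fun h => step g.c1 g.d1 g.d2 ?_,
    fun h => step g.c1 g.d1 g.c2 ?_, fun h => step g.c1 g.d1 g.c2 ?_⟩ <;>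
  · intro v hv
    simp only [Finset.mem_insert, Finset.mem_singleton] at hv ⊢
    rcases hv with h1 | h1 | h1 | h1 <;> rw [h1] <;> simp [h]

end S6

namespace S6

variable {n : ℕ} [NeZero n] {x z : Equiv.Perm (ZMod n)} {ψ : ZMod n × ZMod n → ℤ}

lemma lift_eq {u v : ℤ} (hu0 : 0 ≤ u) (hun : u < n) (hv0 : 0 ≤ v) (hvn : v < n)
    (h : (u : ZMod n) = (v : ZMod n)) : u = v := by
  have := dvd_small n (v - u) (npos n) ((cast_eq_iff n u v).mp h) (by omega) (by omega)
  omega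

lemma x_corners (g : Decomp n ψ x z)
    (h4 : (Finset.univ.filter (fun i : ZMod n => x i ≠ z i)).card = 4) :
    x ((g.R₁.A : ℤ) : ZMod n) = g.c1 ∧ x ((g.R₁.B : ℤ) : ZMod n) = g.d1 ∧
    x ((g.R₂.A : ℤ) : ZMod n) = g.c2 ∧ x ((g.R₂.B : ℤ) : ZMod n) = g.d2 := by
  obtain ⟨q1, q2, q3, q4, q5, q6⟩ := distinct4 g h4
  refine ⟨g.h₁.2.2.2.1, g.h₁.2.2.2.2.1, ?_, ?_⟩
  · have h := g.h₂.2.2.2.1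
    rw [y_apply] at h
    have h2 : x ((g.R₂.A : ℤ) : ZMod n) = Equiv.swap g.c1 g.d1 g.c2 := by
      conv_rhs => rw [show g.c2 = ((g.R₂.C : ℤ) : ZMod n) from rfl, ← h]
      rw [Equiv.swap_apply_self]
    rwa [Equiv.swap_apply_of_ne_of_ne (Ne.symm q2) (Ne.symm q4)] at h2
  · have h := g.h₂.2.2.2.2.1
    rw [y_apply] at h
    have h2 : x ((g.R₂.B : ℤ) : ZMod n) = Equiv.swap g.c1 g.d1 g.d2 := by
      conv_rhs => rw [show g.d2 = ((g.R₂.D : ℤ) : ZMod n) from rfl, ← h]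
      rw [Equiv.swap_apply_self]
    rwa [Equiv.swap_apply_of_ne_of_ne (Ne.symm q3) (Ne.symm q5)] at h2

lemma sigma_vals (g : Decomp n ψ x z)
    (h4 : (Finset.univ.filter (fun i : ZMod n => x i ≠ z i)).card = 4) :
    z (x.symm g.c1) = g.d1 ∧ z (x.symm g.d1) = g.c1 ∧
    z (x.symm g.c2) = g.d2 ∧ z (x.symm g.d2) = g.c2 := by
  obtain ⟨q1, q2, q3, q4, q5, q6⟩ := distinct4 g h4
  refine ⟨?_, ?_, ?_, ?_⟩ <;> rw [sigma_eq g]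
  · rw [Equiv.swap_apply_left, Equiv.swap_apply_of_ne_of_ne q4 q5]
  · rw [Equiv.swap_apply_right, Equiv.swap_apply_of_ne_of_ne q2 q3]
  · rw [Equiv.swap_apply_of_ne_of_ne (Ne.symm q2) (Ne.symm q4), Equiv.swap_apply_left]
  · rw [Equiv.swap_apply_of_ne_of_ne (Ne.symm q3) (Ne.symm q5), Equiv.swap_apply_right]

lemma moved_mem (f : Decomp n ψ x z) (v : ZMod n) (hv : z (x.symm v) ≠ v) :
    v = f.c1 ∨ v = f.d1 ∨ v = f.c2 ∨ v = f.d2 := by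
  by_contra hc
  push_neg at hc
  obtain ⟨n1, n2, n3, n4⟩ := hc
  apply hv
  rw [sigma_eq f, Equiv.swap_apply_of_ne_of_ne n1 n2, Equiv.swap_apply_of_ne_of_ne n3 n4]

end S6

namespace S6

variable {n : ℕ} [NeZero n] {x z : Equiv.Perm (ZMod n)} {ψ : ZMod n × ZMod n → ℤ}

lemma swaps_comm {α : Type*} [DecidableEq α] {a b c d : α}
    (h1 : a ≠ c) (h2 : a ≠ d) (h3 : b ≠ c) (h4 : b ≠ d) (v : α) :
    Equiv.swap c d (Equiv.swap a b v) = Equiv.swap a b (Equiv.swap c d v) := by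
  simp only [Equiv.swap_apply_def]
  split_ifs <;> grind

lemma Decomp.ext' {e f : Decomp n ψ x z} (hy : e.y = f.y) (h1 : e.R₁ = f.R₁)
    (h2 : e.R₂ = f.R₂) : e = f := by
  cases e; cases f
  dsimp at hy h1 h2
  subst hy h1 h2
  rfl

/-- the decomposition with the two rectangles in the other order -/
def flipDecomp (d : Decomp n ψ x z)
    (h4 : (Finset.univ.filter (fun i : ZMod n => x i ≠ z i)).card = 4) :
    Decomp n ψ x z where
  y := x.trans (Equiv.swap ((d.R₂.C : ℤ) : ZMod n) ((d.R₂.D : ℤ) : ZMod n))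
  R₁ := d.R₂
  R₂ := d.R₁
  h₁ := by
    refine ⟨d.h₂.1, d.h₂.2.1, d.h₂.2.2.1, ?_, ?_, rfl⟩
    · exact (x_corners d h4).2.2.1
    · exact (x_corners d h4).2.2.2
  h₂ := by
    obtain ⟨q1, q2, q3, q4, q5, q6⟩ := distinct4 d h4
    refine ⟨d.h₁.1, d.h₁.2.1, d.h₁.2.2.1, ?_, ?_, ?_⟩
    · show Equiv.swap d.c2 d.d2 (x _) = _
      rw [(x_corners d h4).1]
      exact Equiv.swap_apply_of_ne_of_ne q2 q3
    · show Equiv.swap d.c2 d.d2 (x _) = _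
      rw [(x_corners d h4).2.1]
      exact Equiv.swap_apply_of_ne_of_ne q4 q5
    · apply Equiv.ext
      intro i
      show z i = Equiv.swap d.c1 d.d1 (Equiv.swap d.c2 d.d2 (x i))
      rw [z_apply d i]
      exact swaps_comm q2 q3 q4 q5 (x i)
  notboth := fun ⟨a, b⟩ => d.notboth ⟨b, a⟩
  hsum := fun p => by rw [d.hsum p]; ring

lemma flip_ne (d : Decomp n ψ x z)
    (h4 : (Finset.univ.filter (fun i : ZMod n => x i ≠ z i)).card = 4) :
    d ≠ flipDecomp d h4 := by
  intro h
  obtain ⟨q1, q2, q3, q4, q5, q6⟩ := distinct4 d h4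
  apply q2
  show ((d.R₁.C : ℤ) : ZMod n) = ((d.R₂.C : ℤ) : ZMod n)
  rw [show d.R₁ = (flipDecomp d h4).R₁ from by rw [← h]]
  rfl

end S6

namespace S6

variable {n : ℕ} [NeZero n] {x z : Equiv.Perm (ZMod n)} {ψ : ZMod n × ZMod n → ℤ}

lemma CRect.ext' {R S : CRect} (h1 : R.A = S.A) (h2 : R.B = S.B) (h3 : R.C = S.C)
    (h4 : R.D = S.D) : R = S := by
  cases R; cases S; simp_all

lemma x_b1 (g : Decomp n ψ x z) : x ((bhat n g.R₁ : ℤ) : ZMod n) = g.d1 := by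
  rw [bhat_res n g.R₁ g.h₁.2.1]
  exact g.h₁.2.2.2.2.1

lemma x_b2 (g : Decomp n ψ x z)
    (h4 : (Finset.univ.filter (fun i : ZMod n => x i ≠ z i)).card = 4) :
    x ((bhat n g.R₂ : ℤ) : ZMod n) = g.d2 := by
  rw [bhat_res n g.R₂ g.h₂.2.1]
  exact (x_corners g h4).2.2.2

/-- All the numeric data of a decomposition, packaged. -/
structure Nums (n : ℕ) where
  a1 : ℤ
  b1 : ℤ
  c1 : ℤ
  d1 : ℤ
  w1 : ℤ
  h1 : ℤ
  l1 : ℤ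
  m1 : ℤ
  a2 : ℤ
  b2 : ℤ
  c2 : ℤ
  d2 : ℤ
  w2 : ℤ
  h2 : ℤ
  l2 : ℤ
  m2 : ℤ

def numsOf (g : Decomp n ψ x z) : Nums n :=
  ⟨g.R₁.A, bhat n g.R₁, g.R₁.C, dhat n g.R₁, bw n g.R₁, bh n g.R₁, lb n g.R₁, mb n g.R₁,
   g.R₂.A, bhat n g.R₂, g.R₂.C, dhat n g.R₂, bw n g.R₂, bh n g.R₂, lb n g.R₂, mb n g.R₂⟩

/-- the basic bounds and relations for the numeric data of a decomposition -/
lemma nums_spec (g : Decomp n ψ x z) :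
    (0 ≤ (numsOf g).a1 ∧ (numsOf g).a1 < n ∧ 0 ≤ (numsOf g).c1 ∧ (numsOf g).c1 < n) ∧
    (0 ≤ (numsOf g).a2 ∧ (numsOf g).a2 < n ∧ 0 ≤ (numsOf g).c2 ∧ (numsOf g).c2 < n) ∧
    (0 < (numsOf g).w1 ∧ (numsOf g).w1 < n ∧ 0 < (numsOf g).h1 ∧ (numsOf g).h1 < n) ∧
    (0 < (numsOf g).w2 ∧ (numsOf g).w2 < n ∧ 0 < (numsOf g).h2 ∧ (numsOf g).h2 < n) ∧
    (0 ≤ (numsOf g).b1 ∧ (numsOf g).b1 < n ∧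
      ((numsOf g).b1 = (numsOf g).a1 + (numsOf g).w1 ∨
        (numsOf g).b1 = (numsOf g).a1 + (numsOf g).w1 - n)) ∧
    (0 ≤ (numsOf g).d1 ∧ (numsOf g).d1 < n ∧
      ((numsOf g).d1 = (numsOf g).c1 + (numsOf g).h1 ∨
        (numsOf g).d1 = (numsOf g).c1 + (numsOf g).h1 - n)) ∧
    (0 ≤ (numsOf g).b2 ∧ (numsOf g).b2 < n ∧
      ((numsOf g).b2 = (numsOf g).a2 + (numsOf g).w2 ∨
        (numsOf g).b2 = (numsOf g).a2 + (numsOf g).w2 - n)) ∧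
    (0 ≤ (numsOf g).d2 ∧ (numsOf g).d2 < n ∧
      ((numsOf g).d2 = (numsOf g).c2 + (numsOf g).h2 ∨
        (numsOf g).d2 = (numsOf g).c2 + (numsOf g).h2 - n)) ∧
    (((numsOf g).l1 = 0 ∧ g.R₁.B - g.R₁.A = (numsOf g).w1 ∨
      ((numsOf g).l1 = 1 ∧ g.R₁.B - g.R₁.A = (numsOf g).w1 + n ∧ (numsOf g).h1 = 1 ∧
        (numsOf g).m1 = 0))) ∧
    (((numsOf g).m1 = 0 ∧ g.R₁.D - g.R₁.C = (numsOf g).h1 ∨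
      ((numsOf g).m1 = 1 ∧ g.R₁.D - g.R₁.C = (numsOf g).h1 + n ∧ (numsOf g).w1 = 1 ∧
        (numsOf g).l1 = 0))) ∧
    (((numsOf g).l2 = 0 ∧ g.R₂.B - g.R₂.A = (numsOf g).w2 ∨
      ((numsOf g).l2 = 1 ∧ g.R₂.B - g.R₂.A = (numsOf g).w2 + n ∧ (numsOf g).h2 = 1 ∧
        (numsOf g).m2 = 0))) ∧
    (((numsOf g).m2 = 0 ∧ g.R₂.D - g.R₂.C = (numsOf g).h2 ∨
      ((numsOf g).m2 = 1 ∧ g.R₂.D - g.R₂.C = (numsOf g).h2 + n ∧ (numsOf g).w2 = 1 ∧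
        (numsOf g).l2 = 0))) ∧
    ((numsOf g).l1 + (numsOf g).m1 = 0 ∨ (numsOf g).l2 + (numsOf g).m2 = 0) := by
  dsimp only [numsOf]
  obtain ⟨s1a, s1b, s1c, s1d, s1e, s1f⟩ := shape_spec n g.R₁ g.h₁.2.1
  obtain ⟨s2a, s2b, s2c, s2d, s2e, s2f⟩ := shape_spec n g.R₂ g.h₂.2.1
  obtain ⟨t1a, t1b, t1c⟩ := bhat_bounds n g.R₁ g.h₁.1 g.h₁.2.1
  obtain ⟨u1a, u1b, u1c⟩ := dhat_bounds n g.R₁ g.h₁.1 g.h₁.2.1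
  obtain ⟨t2a, t2b, t2c⟩ := bhat_bounds n g.R₂ g.h₂.1 g.h₂.2.1
  obtain ⟨u2a, u2b, u2c⟩ := dhat_bounds n g.R₂ g.h₂.1 g.h₂.2.1
  obtain ⟨v1a, v1b, v1c, v1d⟩ := g.h₁.1
  obtain ⟨v2a, v2b, v2c, v2d⟩ := g.h₂.1
  have hnb : ¬(g.R₁.IsLong n ∧ g.R₂.IsLong n) := g.notboth
  rw [isLong_iff n g.R₁ g.h₁.2.1, isLong_iff n g.R₂ g.h₂.2.1] at hnb
  refine ⟨⟨v1a, v1b, v1c, v1d⟩, ⟨v2a, v2b, v2c, v2d⟩, ⟨s1a, s1b, s1c, s1d⟩,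
    ⟨s2a, s2b, s2c, s2d⟩, ⟨t1a, t1b, t1c⟩, ⟨u1a, u1b, u1c⟩, ⟨t2a, t2b, t2c⟩,
    ⟨u2a, u2b, u2c⟩, s1e, s1f, s2e, s2f, ?_⟩
  by_contra hq
  push_neg at hq
  exact hnb ⟨by omega, by omega⟩

end S6

namespace S6

variable {n : ℕ} [NeZero n] {x z : Equiv.Perm (ZMod n)} {ψ : ZMod n × ZMod n → ℤ}

set_option maxHeartbeats 2000000 in
lemma battle_same (e f : Decomp n ψ x z)
    (h4 : (Finset.univ.filter (fun i : ZMod n => x i ≠ z i)).card = 4)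
    (hc : e.c1 = f.c1) : e = f := by
  have hn := npos n
  obtain ⟨q1, q2, q3, q4, q5, q6⟩ := distinct4 f h4
  obtain ⟨p1, p2, p3, p4, p5, p6⟩ := distinct4 e h4
  obtain ⟨xa1, xB1, xa2, xB2⟩ := x_corners f h4
  obtain ⟨ya1, yB1, ya2, yB2⟩ := x_corners e h4
  have xb1 := x_b1 f
  have xb2 := x_b2 f h4
  have yb1 := x_b1 e
  have yb2 := x_b2 e h4
  have Nf := nums_spec f
  dsimp only [numsOf] at Nf
  obtain ⟨⟨f1a,f1b,f1c,f1d⟩,⟨f2a,f2b,f2c,f2d⟩,⟨fw1,fw1n,fh1,fh1n⟩,⟨fw2,fw2n,fh2,fh2n⟩,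
    ⟨fb1a,fb1b,fb1c⟩,⟨fd1a,fd1b,fd1c⟩,⟨fb2a,fb2b,fb2c⟩,⟨fd2a,fd2b,fd2c⟩,
    fs1,fs2,fs3,fs4,fnb⟩ := Nf
  have Ne := nums_spec e
  dsimp only [numsOf] at Ne
  obtain ⟨⟨g1a,g1b,g1c,g1d⟩,⟨g2a,g2b,g2c,g2d⟩,⟨gw1,gw1n,gh1,gh1n⟩,⟨gw2,gw2n,gh2,gh2n⟩,
    ⟨gb1a,gb1b,gb1c⟩,⟨gd1a,gd1b,gd1c⟩,⟨gb2a,gb2b,gb2c⟩,⟨gd2a,gd2b,gd2c⟩,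
    gs1,gs2,gs3,gs4,gnb⟩ := Ne
  have hd1 : e.d1 = f.d1 := by
    have h1 := (sigma_vals e h4).1
    have h2 := (sigma_vals f h4).1
    rw [hc] at h1
    exact h1.symm.trans h2
  have hc2 : e.c2 = f.c2 ∨ e.c2 = f.d2 := by
    have hm := moved_mem f e.c2 (by rw [(sigma_vals e h4).2.2.1]; exact (Ne.symm p6))
    rcases hm with h | h | h | h
    · exact absurd (hc ▸ h) (Ne.symm p2)
    · exact absurd (hd1 ▸ h) (Ne.symm p4)
    · exact Or.inl h
    · exact Or.inr h
  -- lift identifications for the first pair (same in both cases)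
  have hC1 : e.R₁.C = f.R₁.C := lift_eq g1c g1d f1c f1d hc
  have hA1 : e.R₁.A = f.R₁.A :=
    lift_eq g1a g1b f1a f1b (x.injective (ya1.trans (hc.trans xa1.symm)))
  have hb1 : bhat n e.R₁ = bhat n f.R₁ :=
    lift_eq gb1a gb1b fb1a fb1b (x.injective (yb1.trans (hd1.trans xb1.symm)))
  have hdh1 : dhat n e.R₁ = dhat n f.R₁ := by
    apply lift_eq gd1a gd1b fd1a fd1b
    rw [dhat_res n e.R₁ e.h₁.2.1, dhat_res n f.R₁ f.h₁.2.1]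
    exact hd1
  have hw1 : bw n e.R₁ = bw n f.R₁ := by
    clear * - gb1c fb1c hA1 hb1 gw1 gw1n fw1 fw1n hn
    omega
  have hh1 : bh n e.R₁ = bh n f.R₁ := by
    clear * - gd1c fd1c hC1 hdh1 gh1 gh1n fh1 fh1n hn
    omega
  -- distinctness of column lifts of f
  have dc1 : f.R₁.A ≠ f.R₂.A := fun h => q2 (by rw [← xa1, ← xa2, h])
  have dc2 : f.R₁.A ≠ bhat n f.R₂ := fun h => q3 (by rw [← xa1, ← xb2, h])
  have dc3 : bhat n f.R₁ ≠ f.R₂.A := fun h => q4 (by rw [← xb1, ← xa2, h])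
  have dc4 : bhat n f.R₁ ≠ bhat n f.R₂ := fun h => q5 (by rw [← xb1, ← xb2, h])
  -- distinctness of row lifts of f
  have dr1 : f.R₁.C ≠ f.R₂.C := fun h => q2 (congrArg (fun t : ℤ => ((t : ℤ) : ZMod n)) h)
  have dr2 : f.R₁.C ≠ dhat n f.R₂ := fun h => q3 (by
    have : ((f.R₁.C : ℤ) : ZMod n) = ((dhat n f.R₂ : ℤ) : ZMod n) :=
      congrArg (fun t : ℤ => ((t : ℤ) : ZMod n)) h
    rwa [dhat_res n f.R₂ f.h₂.2.1] at this)
  have dr3 : dhat n f.R₁ ≠ f.R₂.C := fun h => q4 (by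
    have : ((dhat n f.R₁ : ℤ) : ZMod n) = ((f.R₂.C : ℤ) : ZMod n) :=
      congrArg (fun t : ℤ => ((t : ℤ) : ZMod n)) h
    rwa [dhat_res n f.R₁ f.h₁.2.1] at this)
  have dr4 : dhat n f.R₁ ≠ dhat n f.R₂ := fun h => q5 (by
    have : ((dhat n f.R₁ : ℤ) : ZMod n) = ((dhat n f.R₂ : ℤ) : ZMod n) :=
      congrArg (fun t : ℤ => ((t : ℤ) : ZMod n)) h
    rwa [dhat_res n f.R₁ f.h₁.2.1, dhat_res n f.R₂ f.h₂.2.1] at this)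
  -- corner values of the arc indicators
  have s11 : Xa (n:ℤ) f.R₁.A (bw n f.R₁) f.R₁.A = 1 := Xa_self _ _ _ fw1 (le_of_lt fw1n)
  have s10 : Xa (n:ℤ) f.R₁.A (bw n f.R₁) (bhat n f.R₁) = 0 := Xa_end _ _ _ _ fw1 fw1n fb1c fb1a fb1b
  have s21 : Xa (n:ℤ) f.R₂.A (bw n f.R₂) f.R₂.A = 1 := Xa_self _ _ _ fw2 (le_of_lt fw2n)
  have s20 : Xa (n:ℤ) f.R₂.A (bw n f.R₂) (bhat n f.R₂) = 0 := Xa_end _ _ _ _ fw2 fw2n fb2c fb2a fb2b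
  have r11 : Xa (n:ℤ) f.R₁.C (bh n f.R₁) f.R₁.C = 1 := Xa_self _ _ _ fh1 (le_of_lt fh1n)
  have r10 : Xa (n:ℤ) f.R₁.C (bh n f.R₁) (dhat n f.R₁) = 0 := Xa_end _ _ _ _ fh1 fh1n fd1c fd1a fd1b
  have r21 : Xa (n:ℤ) f.R₂.C (bh n f.R₂) f.R₂.C = 1 := Xa_self _ _ _ fh2 (le_of_lt fh2n)
  have r20 : Xa (n:ℤ) f.R₂.C (bh n f.R₂) (dhat n f.R₂) = 0 := Xa_end _ _ _ _ fh2 fh2n fd2c fd2a fd2b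
  -- linking
  have lcol := Xa_link (n:ℤ) f.R₁.A (bw n f.R₁) (bhat n f.R₁) f.R₂.A (bw n f.R₂) (bhat n f.R₂)
    f1a f1b fw1 fw1n fb1c fb1a fb1b f2a f2b fw2 fw2n fb2c fb2a fb2b dc1 dc2 dc3 dc4
  have lrow := Xa_link (n:ℤ) f.R₁.C (bh n f.R₁) (dhat n f.R₁) f.R₂.C (bh n f.R₂) (dhat n f.R₂)
    f1c f1d fh1 fh1n fd1c fd1a fd1b f2c f2d fh2 fh2n fd2c fd2a fd2b dr1 dr2 dr3 dr4
  rcases hc2 with hcc | hcc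
  · -- case A : same orientation in the second pair as well
    have hd2 : e.d2 = f.d2 := by
      have h1 := (sigma_vals e h4).2.2.1
      have h2 := (sigma_vals f h4).2.2.1
      rw [hcc] at h1
      exact h1.symm.trans h2
    have hC2 : e.R₂.C = f.R₂.C := lift_eq g2c g2d f2c f2d hcc
    have hA2 : e.R₂.A = f.R₂.A :=
      lift_eq g2a g2b f2a f2b (x.injective (ya2.trans (hcc.trans xa2.symm)))
    have hb2 : bhat n e.R₂ = bhat n f.R₂ :=
      lift_eq gb2a gb2b fb2a fb2b (x.injective (yb2.trans (hd2.trans xb2.symm)))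
    have hdh2 : dhat n e.R₂ = dhat n f.R₂ := by
      apply lift_eq gd2a gd2b fd2a fd2b
      rw [dhat_res n e.R₂ e.h₂.2.1, dhat_res n f.R₂ f.h₂.2.1]
      exact hd2
    have hw2 : bw n e.R₂ = bw n f.R₂ := by
      clear * - gb2c fb2c hA2 hb2 gw2 gw2n fw2 fw2n hn
      omega
    have hh2 : bh n e.R₂ = bh n f.R₂ := by
      clear * - gd2c fd2c hC2 hdh2 gh2 gh2n fh2 fh2n hn
      omega
    have E : ∀ t s : ℤ, 0 ≤ t → t < n → 0 ≤ s → s < n →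
        (Xa (n:ℤ) f.R₁.A (bw n f.R₁) t + lb n e.R₁) * (Xa (n:ℤ) f.R₁.C (bh n f.R₁) s + mb n e.R₁) + (Xa (n:ℤ) f.R₂.A (bw n f.R₂) t + lb n e.R₂) * (Xa (n:ℤ) f.R₂.C (bh n f.R₂) s + mb n e.R₂)
        = (Xa (n:ℤ) f.R₁.A (bw n f.R₁) t + lb n f.R₁) * (Xa (n:ℤ) f.R₁.C (bh n f.R₁) s + mb n f.R₁) + (Xa (n:ℤ) f.R₂.A (bw n f.R₂) t + lb n f.R₂) * (Xa (n:ℤ) f.R₂.C (bh n f.R₂) s + mb n f.R₂) := by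
      intro t s ht htn hs hsn
      have he := e.hsum ((t : ZMod n), (s : ZMod n))
      have hf := f.hsum ((t : ZMod n), (s : ZMod n))
      rw [mult_eq n e.R₁ e.h₁.1 e.h₁.2.1 t s ht htn hs hsn,
          mult_eq n e.R₂ e.h₂.1 e.h₂.2.1 t s ht htn hs hsn] at he
      rw [mult_eq n f.R₁ f.h₁.1 f.h₁.2.1 t s ht htn hs hsn,
          mult_eq n f.R₂ f.h₂.1 f.h₂.2.1 t s ht htn hs hsn] at hf
      rw [hA1, hC1, hw1, hh1, hA2, hC2, hw2, hh2] at he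
      linear_combination he.symm.trans hf
    have e1 := E f.R₁.A f.R₁.C f1a f1b f1c f1d
    have e2 := E (bhat n f.R₁) f.R₁.C fb1a fb1b f1c f1d
    have e3 := E f.R₂.A f.R₁.C f2a f2b f1c f1d
    have e4 := E (bhat n f.R₂) f.R₁.C fb2a fb2b f1c f1d
    have e6 := E f.R₁.A (dhat n f.R₁) f1a f1b fd1a fd1b
    have e7 := E f.R₁.A f.R₂.C f1a f1b f2c f2d
    have e8 := E f.R₁.A (dhat n f.R₂) f1a f1b fd2a fd2b
    simp only [s11, s10, s21, s20, r11, r10, r21, r20] at e1 e2 e3 e4 e6 e7 e8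
    have D1 : (mb n e.R₁ - mb n f.R₁) + (Xa (n:ℤ) f.R₂.A (bw n f.R₂) f.R₁.A - Xa (n:ℤ) f.R₂.A (bw n f.R₂) (bhat n f.R₁)) * (mb n e.R₂ - mb n f.R₂) = 0 := by
      linear_combination e1 - e2
    have D2 : (Xa (n:ℤ) f.R₁.A (bw n f.R₁) f.R₂.A - Xa (n:ℤ) f.R₁.A (bw n f.R₁) (bhat n f.R₂)) * (mb n e.R₁ - mb n f.R₁) + (mb n e.R₂ - mb n f.R₂) = 0 := by
      linear_combination e3 - e4
    have hm1 : mb n e.R₁ = mb n f.R₁ := by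
      have key : (mb n e.R₁ - mb n f.R₁) * (1 + (Xa (n:ℤ) f.R₁.A (bw n f.R₁) f.R₂.A - Xa (n:ℤ) f.R₁.A (bw n f.R₁) (bhat n f.R₂)) * (Xa (n:ℤ) f.R₁.A (bw n f.R₁) f.R₂.A - Xa (n:ℤ) f.R₁.A (bw n f.R₁) (bhat n f.R₂))) = 0 := by
        linear_combination D1 + (Xa (n:ℤ) f.R₁.A (bw n f.R₁) f.R₂.A - Xa (n:ℤ) f.R₁.A (bw n f.R₁) (bhat n f.R₂)) * D2 - (mb n e.R₂ - mb n f.R₂) * lcol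
      rcases mul_eq_zero.mp key with h | h
      · clear * - h
        omega
      · clear * - h
        linarith [mul_self_nonneg (Xa (n:ℤ) f.R₁.A (bw n f.R₁) f.R₂.A - Xa (n:ℤ) f.R₁.A (bw n f.R₁) (bhat n f.R₂))]
    have hm2 : mb n e.R₂ = mb n f.R₂ := by
      linear_combination D2 - (Xa (n:ℤ) f.R₁.A (bw n f.R₁) f.R₂.A - Xa (n:ℤ) f.R₁.A (bw n f.R₁) (bhat n f.R₂)) * hm1
    have D3 : (lb n e.R₁ - lb n f.R₁) + (Xa (n:ℤ) f.R₂.C (bh n f.R₂) f.R₁.C - Xa (n:ℤ) f.R₂.C (bh n f.R₂) (dhat n f.R₁)) * (lb n e.R₂ - lb n f.R₂) = 0 := by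
      linear_combination e1 - e6
    have D4 : (Xa (n:ℤ) f.R₁.C (bh n f.R₁) f.R₂.C - Xa (n:ℤ) f.R₁.C (bh n f.R₁) (dhat n f.R₂)) * (lb n e.R₁ - lb n f.R₁) + (lb n e.R₂ - lb n f.R₂) = 0 := by
      linear_combination e7 - e8
    have hl1 : lb n e.R₁ = lb n f.R₁ := by
      have key : (lb n e.R₁ - lb n f.R₁) * (1 + (Xa (n:ℤ) f.R₁.C (bh n f.R₁) f.R₂.C - Xa (n:ℤ) f.R₁.C (bh n f.R₁) (dhat n f.R₂)) * (Xa (n:ℤ) f.R₁.C (bh n f.R₁) f.R₂.C - Xa (n:ℤ) f.R₁.C (bh n f.R₁) (dhat n f.R₂))) = 0 := by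
        linear_combination D3 + (Xa (n:ℤ) f.R₁.C (bh n f.R₁) f.R₂.C - Xa (n:ℤ) f.R₁.C (bh n f.R₁) (dhat n f.R₂)) * D4 - (lb n e.R₂ - lb n f.R₂) * lrow
      rcases mul_eq_zero.mp key with h | h
      · clear * - h
        omega
      · clear * - h
        linarith [mul_self_nonneg (Xa (n:ℤ) f.R₁.C (bh n f.R₁) f.R₂.C - Xa (n:ℤ) f.R₁.C (bh n f.R₁) (dhat n f.R₂))]
    have hl2 : lb n e.R₂ = lb n f.R₂ := by
      linear_combination D4 - (Xa (n:ℤ) f.R₁.C (bh n f.R₁) f.R₂.C - Xa (n:ℤ) f.R₁.C (bh n f.R₁) (dhat n f.R₂)) * hl1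
    have hB1 : e.R₁.B = f.R₁.B := by
      clear * - hA1 hw1 hl1 gs1 fs1 hn
      omega
    have hD1 : e.R₁.D = f.R₁.D := by
      clear * - hC1 hh1 hm1 gs2 fs2 hn
      omega
    have hB2 : e.R₂.B = f.R₂.B := by
      clear * - hA2 hw2 hl2 gs3 fs3 hn
      omega
    have hD2 : e.R₂.D = f.R₂.D := by
      clear * - hC2 hh2 hm2 gs4 fs4 hn
      omega
    have hR1 : e.R₁ = f.R₁ := CRect.ext' hA1 hB1 hC1 hD1
    have hR2 : e.R₂ = f.R₂ := CRect.ext' hA2 hB2 hC2 hD2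
    refine Decomp.ext' ?_ hR1 hR2
    rw [e.h₁.2.2.2.2.2, f.h₁.2.2.2.2.2, hR1]
  · -- case B : second pair flipped, contradiction
    exfalso
    have hd2 : e.d2 = f.c2 := by
      have h1 := (sigma_vals e h4).2.2.1
      have h2 := (sigma_vals f h4).2.2.2
      rw [hcc] at h1
      exact h1.symm.trans h2
    have hC2 : e.R₂.C = dhat n f.R₂ :=
      lift_eq g2c g2d fd2a fd2b (hcc.trans (dhat_res n f.R₂ f.h₂.2.1).symm)
    have hA2 : e.R₂.A = bhat n f.R₂ :=
      lift_eq g2a g2b fb2a fb2b (x.injective (ya2.trans (hcc.trans (x_b2 f h4).symm)))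
    have hb2e : bhat n e.R₂ = f.R₂.A :=
      lift_eq gb2a gb2b f2a f2b (x.injective (yb2.trans (hd2.trans xa2.symm)))
    have hdh2e : dhat n e.R₂ = f.R₂.C := by
      apply lift_eq gd2a gd2b f2c f2d
      rw [dhat_res n e.R₂ e.h₂.2.1]
      exact hd2
    have hw2 : bw n e.R₂ = n - bw n f.R₂ := by
      clear * - gb2c fb2c hA2 hb2e gw2 gw2n fw2 fw2n fb2a fb2b f2a f2b hn
      omega
    have hh2 : bh n e.R₂ = n - bh n f.R₂ := by
      clear * - gd2c fd2c hC2 hdh2e gh2 gh2n fh2 fh2n fd2a fd2b f2c f2d hn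
      omega
    have E : ∀ t s : ℤ, 0 ≤ t → t < n → 0 ≤ s → s < n →
        (Xa (n:ℤ) f.R₁.A (bw n f.R₁) t + lb n e.R₁) * (Xa (n:ℤ) f.R₁.C (bh n f.R₁) s + mb n e.R₁)
          + ((1 - Xa (n:ℤ) f.R₂.A (bw n f.R₂) t) + lb n e.R₂) * ((1 - Xa (n:ℤ) f.R₂.C (bh n f.R₂) s) + mb n e.R₂)
        = (Xa (n:ℤ) f.R₁.A (bw n f.R₁) t + lb n f.R₁) * (Xa (n:ℤ) f.R₁.C (bh n f.R₁) s + mb n f.R₁) + (Xa (n:ℤ) f.R₂.A (bw n f.R₂) t + lb n f.R₂) * (Xa (n:ℤ) f.R₂.C (bh n f.R₂) s + mb n f.R₂) := by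
      intro t s ht htn hs hsn
      have he := e.hsum ((t : ZMod n), (s : ZMod n))
      have hf := f.hsum ((t : ZMod n), (s : ZMod n))
      rw [mult_eq n e.R₁ e.h₁.1 e.h₁.2.1 t s ht htn hs hsn,
          mult_eq n e.R₂ e.h₂.1 e.h₂.2.1 t s ht htn hs hsn] at he
      rw [mult_eq n f.R₁ f.h₁.1 f.h₁.2.1 t s ht htn hs hsn,
          mult_eq n f.R₂ f.h₂.1 f.h₂.2.1 t s ht htn hs hsn] at hf
      rw [hA1, hC1, hw1, hh1, hA2, hC2, hw2, hh2,
          Xa_compl (n:ℤ) f.R₂.A (bw n f.R₂) (bhat n f.R₂) t fw2 fw2n f2a f2b fb2c fb2a fb2b ht htn,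
          Xa_compl (n:ℤ) f.R₂.C (bh n f.R₂) (dhat n f.R₂) s fh2 fh2n f2c f2d fd2c fd2a fd2b hs hsn]
        at he
      linear_combination he.symm.trans hf
    have e1 := E f.R₁.A f.R₁.C f1a f1b f1c f1d
    have e2 := E (bhat n f.R₁) f.R₁.C fb1a fb1b f1c f1d
    have e3 := E f.R₂.A f.R₁.C f2a f2b f1c f1d
    have e4 := E (bhat n f.R₂) f.R₁.C fb2a fb2b f1c f1d
    simp only [s11, s10, s21, s20, r11, r10, r21, r20] at e1 e2 e3 e4
    have D1 : (mb n e.R₁ - mb n f.R₁) - (Xa (n:ℤ) f.R₂.A (bw n f.R₂) f.R₁.A - Xa (n:ℤ) f.R₂.A (bw n f.R₂) (bhat n f.R₁)) * (1 + mb n e.R₂ + mb n f.R₂) = 0 := by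
      linear_combination e1 - e2
    have D2 : (Xa (n:ℤ) f.R₁.A (bw n f.R₁) f.R₂.A - Xa (n:ℤ) f.R₁.A (bw n f.R₁) (bhat n f.R₂)) * (mb n e.R₁ - mb n f.R₁) - (1 + mb n e.R₂ + mb n f.R₂) = 0 := by
      linear_combination e3 - e4
    have key : (1 + mb n e.R₂ + mb n f.R₂) * (1 + (Xa (n:ℤ) f.R₁.A (bw n f.R₁) f.R₂.A - Xa (n:ℤ) f.R₁.A (bw n f.R₁) (bhat n f.R₂)) * (Xa (n:ℤ) f.R₁.A (bw n f.R₁) f.R₂.A - Xa (n:ℤ) f.R₁.A (bw n f.R₁) (bhat n f.R₂))) = 0 := by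
      linear_combination (Xa (n:ℤ) f.R₁.A (bw n f.R₁) f.R₂.A - Xa (n:ℤ) f.R₁.A (bw n f.R₁) (bhat n f.R₂)) * D1 - D2 + (Xa (n:ℤ) f.R₁.A (bw n f.R₁) f.R₂.A - Xa (n:ℤ) f.R₁.A (bw n f.R₁) (bhat n f.R₂)) * (1 + mb n e.R₂ + mb n f.R₂) * lcol
    rcases mul_eq_zero.mp key with h | h
    · clear * - h gs4 fs4
      omega
    · clear * - h
      linarith [mul_self_nonneg (Xa (n:ℤ) f.R₁.A (bw n f.R₁) f.R₂.A - Xa (n:ℤ) f.R₁.A (bw n f.R₁) (bhat n f.R₂))]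

end S6

namespace S6

variable {n : ℕ} [NeZero n] {x z : Equiv.Perm (ZMod n)} {ψ : ZMod n × ZMod n → ℤ}

set_option maxHeartbeats 2000000 in
lemma battle_flip (e f : Decomp n ψ x z)
    (h4 : (Finset.univ.filter (fun i : ZMod n => x i ≠ z i)).card = 4)
    (hc : e.c1 = f.d1) : False := by
  have hn := npos n
  obtain ⟨q1, q2, q3, q4, q5, q6⟩ := distinct4 f h4
  obtain ⟨p1, p2, p3, p4, p5, p6⟩ := distinct4 e h4
  obtain ⟨xa1, xB1, xa2, xB2⟩ := x_corners f h4
  obtain ⟨ya1, yB1, ya2, yB2⟩ := x_corners e h4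
  have xb1 := x_b1 f
  have xb2 := x_b2 f h4
  have yb1 := x_b1 e
  have yb2 := x_b2 e h4
  have Nf := nums_spec f
  dsimp only [numsOf] at Nf
  obtain ⟨⟨f1a,f1b,f1c,f1d⟩,⟨f2a,f2b,f2c,f2d⟩,⟨fw1,fw1n,fh1,fh1n⟩,⟨fw2,fw2n,fh2,fh2n⟩,
    ⟨fb1a,fb1b,fb1c⟩,⟨fd1a,fd1b,fd1c⟩,⟨fb2a,fb2b,fb2c⟩,⟨fd2a,fd2b,fd2c⟩,
    fs1,fs2,fs3,fs4,fnb⟩ := Nf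
  have Ne := nums_spec e
  dsimp only [numsOf] at Ne
  obtain ⟨⟨g1a,g1b,g1c,g1d⟩,⟨g2a,g2b,g2c,g2d⟩,⟨gw1,gw1n,gh1,gh1n⟩,⟨gw2,gw2n,gh2,gh2n⟩,
    ⟨gb1a,gb1b,gb1c⟩,⟨gd1a,gd1b,gd1c⟩,⟨gb2a,gb2b,gb2c⟩,⟨gd2a,gd2b,gd2c⟩,
    gs1,gs2,gs3,gs4,gnb⟩ := Ne
  have hd1 : e.d1 = f.c1 := by
    have h1 := (sigma_vals e h4).1
    have h2 := (sigma_vals f h4).2.1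
    rw [hc] at h1
    exact h1.symm.trans h2
  have hc2 : e.c2 = f.c2 ∨ e.c2 = f.d2 := by
    have hm := moved_mem f e.c2 (by rw [(sigma_vals e h4).2.2.1]; exact (Ne.symm p6))
    rcases hm with h | h | h | h
    · exact absurd (hd1 ▸ h) (Ne.symm p4)
    · exact absurd (hc ▸ h) (Ne.symm p2)
    · exact Or.inl h
    · exact Or.inr h
  -- flipped identifications for the first pair
  have hC1 : e.R₁.C = dhat n f.R₁ :=
    lift_eq g1c g1d fd1a fd1b (hc.trans (dhat_res n f.R₁ f.h₁.2.1).symm)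
  have hA1 : e.R₁.A = bhat n f.R₁ :=
    lift_eq g1a g1b fb1a fb1b (x.injective (ya1.trans (hc.trans (x_b1 f).symm)))
  have hb1e : bhat n e.R₁ = f.R₁.A :=
    lift_eq gb1a gb1b f1a f1b (x.injective (yb1.trans (hd1.trans xa1.symm)))
  have hdh1e : dhat n e.R₁ = f.R₁.C := by
    apply lift_eq gd1a gd1b f1c f1d
    rw [dhat_res n e.R₁ e.h₁.2.1]
    exact hd1
  have hw1 : bw n e.R₁ = n - bw n f.R₁ := by
    clear * - gb1c fb1c hA1 hb1e gw1 gw1n fw1 fw1n fb1a fb1b f1a f1b hn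
    omega
  have hh1 : bh n e.R₁ = n - bh n f.R₁ := by
    clear * - gd1c fd1c hC1 hdh1e gh1 gh1n fh1 fh1n fd1a fd1b f1c f1d hn
    omega
  -- distinctness of column lifts of f
  have dc1 : f.R₁.A ≠ f.R₂.A := fun h => q2 (by rw [← xa1, ← xa2, h])
  have dc2 : f.R₁.A ≠ bhat n f.R₂ := fun h => q3 (by rw [← xa1, ← xb2, h])
  have dc3 : bhat n f.R₁ ≠ f.R₂.A := fun h => q4 (by rw [← xb1, ← xa2, h])
  have dc4 : bhat n f.R₁ ≠ bhat n f.R₂ := fun h => q5 (by rw [← xb1, ← xb2, h])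
  -- corner values of the arc indicators
  have s11 : Xa (n:ℤ) f.R₁.A (bw n f.R₁) f.R₁.A = 1 := Xa_self _ _ _ fw1 (le_of_lt fw1n)
  have s10 : Xa (n:ℤ) f.R₁.A (bw n f.R₁) (bhat n f.R₁) = 0 := Xa_end _ _ _ _ fw1 fw1n fb1c fb1a fb1b
  have s21 : Xa (n:ℤ) f.R₂.A (bw n f.R₂) f.R₂.A = 1 := Xa_self _ _ _ fw2 (le_of_lt fw2n)
  have s20 : Xa (n:ℤ) f.R₂.A (bw n f.R₂) (bhat n f.R₂) = 0 := Xa_end _ _ _ _ fw2 fw2n fb2c fb2a fb2b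
  have r11 : Xa (n:ℤ) f.R₁.C (bh n f.R₁) f.R₁.C = 1 := Xa_self _ _ _ fh1 (le_of_lt fh1n)
  have r21 : Xa (n:ℤ) f.R₂.C (bh n f.R₂) f.R₂.C = 1 := Xa_self _ _ _ fh2 (le_of_lt fh2n)
  have lcol := Xa_link (n:ℤ) f.R₁.A (bw n f.R₁) (bhat n f.R₁) f.R₂.A (bw n f.R₂) (bhat n f.R₂)
    f1a f1b fw1 fw1n fb1c fb1a fb1b f2a f2b fw2 fw2n fb2c fb2a fb2b dc1 dc2 dc3 dc4
  rcases hc2 with hcc | hcc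
  · -- second pair same orientation
    have hd2 : e.d2 = f.d2 := by
      have h1 := (sigma_vals e h4).2.2.1
      have h2 := (sigma_vals f h4).2.2.1
      rw [hcc] at h1
      exact h1.symm.trans h2
    have hC2 : e.R₂.C = f.R₂.C := lift_eq g2c g2d f2c f2d hcc
    have hA2 : e.R₂.A = f.R₂.A :=
      lift_eq g2a g2b f2a f2b (x.injective (ya2.trans (hcc.trans xa2.symm)))
    have hb2 : bhat n e.R₂ = bhat n f.R₂ :=
      lift_eq gb2a gb2b fb2a fb2b (x.injective (yb2.trans (hd2.trans xb2.symm)))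
    have hdh2 : dhat n e.R₂ = dhat n f.R₂ := by
      apply lift_eq gd2a gd2b fd2a fd2b
      rw [dhat_res n e.R₂ e.h₂.2.1, dhat_res n f.R₂ f.h₂.2.1]
      exact hd2
    have hw2 : bw n e.R₂ = bw n f.R₂ := by
      clear * - gb2c fb2c hA2 hb2 gw2 gw2n fw2 fw2n hn
      omega
    have hh2 : bh n e.R₂ = bh n f.R₂ := by
      clear * - gd2c fd2c hC2 hdh2 gh2 gh2n fh2 fh2n hn
      omega
    have E : ∀ t s : ℤ, 0 ≤ t → t < n → 0 ≤ s → s < n →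
        ((1 - Xa (n:ℤ) f.R₁.A (bw n f.R₁) t) + lb n e.R₁) * ((1 - Xa (n:ℤ) f.R₁.C (bh n f.R₁) s) + mb n e.R₁)
          + (Xa (n:ℤ) f.R₂.A (bw n f.R₂) t + lb n e.R₂) * (Xa (n:ℤ) f.R₂.C (bh n f.R₂) s + mb n e.R₂)
        = (Xa (n:ℤ) f.R₁.A (bw n f.R₁) t + lb n f.R₁) * (Xa (n:ℤ) f.R₁.C (bh n f.R₁) s + mb n f.R₁) + (Xa (n:ℤ) f.R₂.A (bw n f.R₂) t + lb n f.R₂) * (Xa (n:ℤ) f.R₂.C (bh n f.R₂) s + mb n f.R₂) := by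
      intro t s ht htn hs hsn
      have he := e.hsum ((t : ZMod n), (s : ZMod n))
      have hf := f.hsum ((t : ZMod n), (s : ZMod n))
      rw [mult_eq n e.R₁ e.h₁.1 e.h₁.2.1 t s ht htn hs hsn,
          mult_eq n e.R₂ e.h₂.1 e.h₂.2.1 t s ht htn hs hsn] at he
      rw [mult_eq n f.R₁ f.h₁.1 f.h₁.2.1 t s ht htn hs hsn,
          mult_eq n f.R₂ f.h₂.1 f.h₂.2.1 t s ht htn hs hsn] at hf
      rw [hA1, hC1, hw1, hh1, hA2, hC2, hw2, hh2,
          Xa_compl (n:ℤ) f.R₁.A (bw n f.R₁) (bhat n f.R₁) t fw1 fw1n f1a f1b fb1c fb1a fb1b ht htn,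
          Xa_compl (n:ℤ) f.R₁.C (bh n f.R₁) (dhat n f.R₁) s fh1 fh1n f1c f1d fd1c fd1a fd1b hs hsn]
        at he
      linear_combination he.symm.trans hf
    have e1 := E f.R₁.A f.R₁.C f1a f1b f1c f1d
    have e2 := E (bhat n f.R₁) f.R₁.C fb1a fb1b f1c f1d
    have e3 := E f.R₂.A f.R₁.C f2a f2b f1c f1d
    have e4 := E (bhat n f.R₂) f.R₁.C fb2a fb2b f1c f1d
    simp only [s11, s10, s21, s20, r11, r21] at e1 e2 e3 e4
    have D1 : (Xa (n:ℤ) f.R₂.A (bw n f.R₂) f.R₁.A - Xa (n:ℤ) f.R₂.A (bw n f.R₂) (bhat n f.R₁)) * (mb n e.R₂ - mb n f.R₂) - (1 + mb n e.R₁ + mb n f.R₁) = 0 := by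
      linear_combination e1 - e2
    have D2 : (mb n e.R₂ - mb n f.R₂) - (Xa (n:ℤ) f.R₁.A (bw n f.R₁) f.R₂.A - Xa (n:ℤ) f.R₁.A (bw n f.R₁) (bhat n f.R₂)) * (1 + mb n e.R₁ + mb n f.R₁) = 0 := by
      linear_combination e3 - e4
    have key : (1 + mb n e.R₁ + mb n f.R₁) * (1 + (Xa (n:ℤ) f.R₁.A (bw n f.R₁) f.R₂.A - Xa (n:ℤ) f.R₁.A (bw n f.R₁) (bhat n f.R₂)) * (Xa (n:ℤ) f.R₁.A (bw n f.R₁) f.R₂.A - Xa (n:ℤ) f.R₁.A (bw n f.R₁) (bhat n f.R₂))) = 0 := by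
      linear_combination (-1) * D1 + (Xa (n:ℤ) f.R₂.A (bw n f.R₂) f.R₁.A - Xa (n:ℤ) f.R₂.A (bw n f.R₂) (bhat n f.R₁)) * D2 + (Xa (n:ℤ) f.R₁.A (bw n f.R₁) f.R₂.A - Xa (n:ℤ) f.R₁.A (bw n f.R₁) (bhat n f.R₂)) * (1 + mb n e.R₁ + mb n f.R₁) * lcol
    rcases mul_eq_zero.mp key with h | h
    · clear * - h gs2 fs2
      omega
    · clear * - h
      linarith [mul_self_nonneg (Xa (n:ℤ) f.R₁.A (bw n f.R₁) f.R₂.A - Xa (n:ℤ) f.R₁.A (bw n f.R₁) (bhat n f.R₂))]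
  · -- second pair flipped as well
    have hd2 : e.d2 = f.c2 := by
      have h1 := (sigma_vals e h4).2.2.1
      have h2 := (sigma_vals f h4).2.2.2
      rw [hcc] at h1
      exact h1.symm.trans h2
    have hC2 : e.R₂.C = dhat n f.R₂ :=
      lift_eq g2c g2d fd2a fd2b (hcc.trans (dhat_res n f.R₂ f.h₂.2.1).symm)
    have hA2 : e.R₂.A = bhat n f.R₂ :=
      lift_eq g2a g2b fb2a fb2b (x.injective (ya2.trans (hcc.trans (x_b2 f h4).symm)))
    have hb2e : bhat n e.R₂ = f.R₂.A :=
      lift_eq gb2a gb2b f2a f2b (x.injective (yb2.trans (hd2.trans xa2.symm)))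
    have hdh2e : dhat n e.R₂ = f.R₂.C := by
      apply lift_eq gd2a gd2b f2c f2d
      rw [dhat_res n e.R₂ e.h₂.2.1]
      exact hd2
    have hw2 : bw n e.R₂ = n - bw n f.R₂ := by
      clear * - gb2c fb2c hA2 hb2e gw2 gw2n fw2 fw2n fb2a fb2b f2a f2b hn
      omega
    have hh2 : bh n e.R₂ = n - bh n f.R₂ := by
      clear * - gd2c fd2c hC2 hdh2e gh2 gh2n fh2 fh2n fd2a fd2b f2c f2d hn
      omega
    have E : ∀ t s : ℤ, 0 ≤ t → t < n → 0 ≤ s → s < n →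
        ((1 - Xa (n:ℤ) f.R₁.A (bw n f.R₁) t) + lb n e.R₁) * ((1 - Xa (n:ℤ) f.R₁.C (bh n f.R₁) s) + mb n e.R₁)
          + ((1 - Xa (n:ℤ) f.R₂.A (bw n f.R₂) t) + lb n e.R₂) * ((1 - Xa (n:ℤ) f.R₂.C (bh n f.R₂) s) + mb n e.R₂)
        = (Xa (n:ℤ) f.R₁.A (bw n f.R₁) t + lb n f.R₁) * (Xa (n:ℤ) f.R₁.C (bh n f.R₁) s + mb n f.R₁) + (Xa (n:ℤ) f.R₂.A (bw n f.R₂) t + lb n f.R₂) * (Xa (n:ℤ) f.R₂.C (bh n f.R₂) s + mb n f.R₂) := by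
      intro t s ht htn hs hsn
      have he := e.hsum ((t : ZMod n), (s : ZMod n))
      have hf := f.hsum ((t : ZMod n), (s : ZMod n))
      rw [mult_eq n e.R₁ e.h₁.1 e.h₁.2.1 t s ht htn hs hsn,
          mult_eq n e.R₂ e.h₂.1 e.h₂.2.1 t s ht htn hs hsn] at he
      rw [mult_eq n f.R₁ f.h₁.1 f.h₁.2.1 t s ht htn hs hsn,
          mult_eq n f.R₂ f.h₂.1 f.h₂.2.1 t s ht htn hs hsn] at hf
      rw [hA1, hC1, hw1, hh1, hA2, hC2, hw2, hh2,
          Xa_compl (n:ℤ) f.R₁.A (bw n f.R₁) (bhat n f.R₁) t fw1 fw1n f1a f1b fb1c fb1a fb1b ht htn,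
          Xa_compl (n:ℤ) f.R₁.C (bh n f.R₁) (dhat n f.R₁) s fh1 fh1n f1c f1d fd1c fd1a fd1b hs hsn,
          Xa_compl (n:ℤ) f.R₂.A (bw n f.R₂) (bhat n f.R₂) t fw2 fw2n f2a f2b fb2c fb2a fb2b ht htn,
          Xa_compl (n:ℤ) f.R₂.C (bh n f.R₂) (dhat n f.R₂) s fh2 fh2n f2c f2d fd2c fd2a fd2b hs hsn]
        at he
      linear_combination he.symm.trans hf
    have e1 := E f.R₁.A f.R₁.C f1a f1b f1c f1d
    have e2 := E (bhat n f.R₁) f.R₁.C fb1a fb1b f1c f1d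
    have e3 := E f.R₂.A f.R₁.C f2a f2b f1c f1d
    have e4 := E (bhat n f.R₂) f.R₁.C fb2a fb2b f1c f1d
    simp only [s11, s10, s21, s20, r11, r21] at e1 e2 e3 e4
    have D1 : (Xa (n:ℤ) f.R₂.A (bw n f.R₂) f.R₁.A - Xa (n:ℤ) f.R₂.A (bw n f.R₂) (bhat n f.R₁)) * (1 + mb n e.R₂ + mb n f.R₂) + (1 + mb n e.R₁ + mb n f.R₁) = 0 := by
      linear_combination e2 - e1
    have D2 : (Xa (n:ℤ) f.R₁.A (bw n f.R₁) f.R₂.A - Xa (n:ℤ) f.R₁.A (bw n f.R₁) (bhat n f.R₂)) * (1 + mb n e.R₁ + mb n f.R₁) + (1 + mb n e.R₂ + mb n f.R₂) = 0 := by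
      linear_combination e4 - e3
    have key : (1 + mb n e.R₂ + mb n f.R₂) * (1 + (Xa (n:ℤ) f.R₁.A (bw n f.R₁) f.R₂.A - Xa (n:ℤ) f.R₁.A (bw n f.R₁) (bhat n f.R₂)) * (Xa (n:ℤ) f.R₁.A (bw n f.R₁) f.R₂.A - Xa (n:ℤ) f.R₁.A (bw n f.R₁) (bhat n f.R₂))) = 0 := by
      linear_combination D2 - (Xa (n:ℤ) f.R₁.A (bw n f.R₁) f.R₂.A - Xa (n:ℤ) f.R₁.A (bw n f.R₁) (bhat n f.R₂)) * D1 + (Xa (n:ℤ) f.R₁.A (bw n f.R₁) f.R₂.A - Xa (n:ℤ) f.R₁.A (bw n f.R₁) (bhat n f.R₂)) * (1 + mb n e.R₂ + mb n f.R₂) * lcol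
    rcases mul_eq_zero.mp key with h | h
    · clear * - h gs4 fs4
      omega
    · clear * - h
      linarith [mul_self_nonneg (Xa (n:ℤ) f.R₁.A (bw n f.R₁) f.R₂.A - Xa (n:ℤ) f.R₁.A (bw n f.R₁) (bhat n f.R₂))]

end S6

namespace S6

variable {n : ℕ} [NeZero n] {x z : Equiv.Perm (ZMod n)} {ψ : ZMod n × ZMod n → ℤ}

lemma intCount_swap (R : CRect) (w x : Equiv.Perm (ZMod n)) (cv dv p' q' : ZMod n)
    (hw : ∀ i, w i = Equiv.swap cv dv (x i)) (hp : x p' = cv) (hq : x q' = dv)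
    (hcd : cv ≠ dv) :
    (R.intCount n w : ℤ) - R.intCount n x =
      ((((Finset.Ioo R.A R.B).filter (fun u : ℤ => (u : ZMod n) = p')).card : ℤ) -
        ((Finset.Ioo R.A R.B).filter (fun u : ℤ => (u : ZMod n) = q')).card) *
      ((((Finset.Ioo R.C R.D).filter (fun v : ℤ => (v : ZMod n) = dv)).card : ℤ) -
        ((Finset.Ioo R.C R.D).filter (fun v : ℤ => (v : ZMod n) = cv)).card) := by
  classical
  have hpq : p' ≠ q' := by
    intro h
    exact hcd (hp ▸ hq ▸ (by rw [h]))
  set s := (Finset.Ioo R.A R.B) ×ˢ (Finset.Ioo R.C R.D) with hs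
  have count : ∀ v : Equiv.Perm (ZMod n), R.intCount n v
      = (s.filter (fun q : ℤ × ℤ =>
            v ((q.1 : ZMod n)) = (q.2 : ZMod n) ∧ ¬((q.1 : ZMod n) = p' ∨ (q.1 : ZMod n) = q'))).card
        + ((Finset.Ioo R.A R.B).filter (fun u : ℤ => (u : ZMod n) = p')).card *
            ((Finset.Ioo R.C R.D).filter (fun t : ℤ => (t : ZMod n) = v p')).card
        + ((Finset.Ioo R.A R.B).filter (fun u : ℤ => (u : ZMod n) = q')).card *
            ((Finset.Ioo R.C R.D).filter (fun t : ℤ => (t : ZMod n) = v q')).card := by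
    intro v
    have h1 : (s.filter (fun q : ℤ × ℤ => v ((q.1 : ZMod n)) = (q.2 : ZMod n)))
        = (s.filter (fun q : ℤ × ℤ =>
            v ((q.1 : ZMod n)) = (q.2 : ZMod n) ∧ ¬((q.1 : ZMod n) = p' ∨ (q.1 : ZMod n) = q')))
          ∪ (s.filter (fun q : ℤ × ℤ =>
            v ((q.1 : ZMod n)) = (q.2 : ZMod n) ∧ (q.1 : ZMod n) = p'))
          ∪ (s.filter (fun q : ℤ × ℤ =>
            v ((q.1 : ZMod n)) = (q.2 : ZMod n) ∧ (q.1 : ZMod n) = q')) := by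
      ext q
      simp only [Finset.mem_filter, Finset.mem_union]
      tauto
    have d1 : Disjoint
        ((s.filter (fun q : ℤ × ℤ =>
            v ((q.1 : ZMod n)) = (q.2 : ZMod n) ∧ ¬((q.1 : ZMod n) = p' ∨ (q.1 : ZMod n) = q')))
          ∪ (s.filter (fun q : ℤ × ℤ =>
            v ((q.1 : ZMod n)) = (q.2 : ZMod n) ∧ (q.1 : ZMod n) = p')))
        (s.filter (fun q : ℤ × ℤ =>
            v ((q.1 : ZMod n)) = (q.2 : ZMod n) ∧ (q.1 : ZMod n) = q')) := by
      rw [Finset.disjoint_left]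
      intro q hq1 hq2
      simp only [Finset.mem_union, Finset.mem_filter] at hq1 hq2
      rcases hq1 with h | h
      · exact h.2.2 (Or.inr hq2.2.2)
      · exact hpq (h.2.2 ▸ hq2.2.2 ▸ rfl)
    have d2 : Disjoint
        (s.filter (fun q : ℤ × ℤ =>
            v ((q.1 : ZMod n)) = (q.2 : ZMod n) ∧ ¬((q.1 : ZMod n) = p' ∨ (q.1 : ZMod n) = q')))
        (s.filter (fun q : ℤ × ℤ =>
            v ((q.1 : ZMod n)) = (q.2 : ZMod n) ∧ (q.1 : ZMod n) = p')) := by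
      rw [Finset.disjoint_left]
      intro q hq1 hq2
      simp only [Finset.mem_filter] at hq1 hq2
      exact hq1.2.2 (Or.inl hq2.2.2)
    have hprod : ∀ a : ZMod n, (hxa : x a = v a → True) → True := fun _ _ => trivial
    have h2 : ∀ a : ZMod n, (s.filter (fun q : ℤ × ℤ =>
          v ((q.1 : ZMod n)) = (q.2 : ZMod n) ∧ (q.1 : ZMod n) = a))
        = ((Finset.Ioo R.A R.B).filter (fun u : ℤ => (u : ZMod n) = a)) ×ˢ
          ((Finset.Ioo R.C R.D).filter (fun t : ℤ => (t : ZMod n) = v a)) := by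
      intro a
      ext q
      simp only [Finset.mem_filter, Finset.mem_product, hs]
      constructor
      · rintro ⟨⟨hu, ht⟩, hv, ha⟩
        exact ⟨⟨hu, ha⟩, ht, by rw [← ha, hv]⟩
      · rintro ⟨⟨hu, ha⟩, ht, hv⟩
        exact ⟨⟨hu, ht⟩, by rw [ha, ← hv], ha⟩
    show (s.filter (fun q : ℤ × ℤ => v ((q.1 : ZMod n)) = (q.2 : ZMod n))).card = _
    rw [h1, Finset.card_union_of_disjoint d1, Finset.card_union_of_disjoint d2,
      h2 p', h2 q', Finset.card_product, Finset.card_product]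
  have hwp : w p' = dv := by rw [hw, hp, Equiv.swap_apply_left]
  have hwq : w q' = cv := by rw [hw, hq, Equiv.swap_apply_right]
  have hsame : (s.filter (fun q : ℤ × ℤ =>
        w ((q.1 : ZMod n)) = (q.2 : ZMod n) ∧ ¬((q.1 : ZMod n) = p' ∨ (q.1 : ZMod n) = q')))
      = (s.filter (fun q : ℤ × ℤ =>
        x ((q.1 : ZMod n)) = (q.2 : ZMod n) ∧ ¬((q.1 : ZMod n) = p' ∨ (q.1 : ZMod n) = q'))) := by
    apply Finset.filter_congr
    intro q _
    constructor
    · rintro ⟨hv, hnq⟩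
      refine ⟨?_, hnq⟩
      rw [hw] at hv
      rwa [Equiv.swap_apply_of_ne_of_ne
        (fun h => hnq (Or.inl (x.injective (h.trans hp.symm))))
        (fun h => hnq (Or.inr (x.injective (h.trans hq.symm))))] at hv
    · rintro ⟨hv, hnq⟩
      refine ⟨?_, hnq⟩
      rw [hw, Equiv.swap_apply_of_ne_of_ne
        (fun h => hnq (Or.inl (x.injective (h.trans hp.symm))))
        (fun h => hnq (Or.inr (x.injective (h.trans hq.symm))))]
      exact hv
  rw [count w, count x, hsame, hwp, hwq, hp, hq]
  push_cast
  ring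

end S6

namespace S6

variable {n : ℕ} [NeZero n] {x z : Equiv.Perm (ZMod n)} {ψ : ZMod n × ZMod n → ℤ}

set_option maxHeartbeats 4000000 in
lemma deg_flip (d : Decomp n ψ x z)
    (h4 : (Finset.univ.filter (fun i : ZMod n => x i ≠ z i)).card = 4) :
    d.deg = (flipDecomp d h4).deg := by
  have hn := npos n
  obtain ⟨q1, q2, q3, q4, q5, q6⟩ := distinct4 d h4
  obtain ⟨xa1, xB1, xa2, xB2⟩ := x_corners d h4
  have xb1 := x_b1 d
  have xb2 := x_b2 d h4
  have N := nums_spec d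
  dsimp only [numsOf] at N
  obtain ⟨⟨f1a,f1b,f1c,f1d⟩,⟨f2a,f2b,f2c,f2d⟩,⟨fw1,fw1n,fh1,fh1n⟩,⟨fw2,fw2n,fh2,fh2n⟩,
    ⟨fb1a,fb1b,fb1c⟩,⟨fd1a,fd1b,fd1c⟩,⟨fb2a,fb2b,fb2c⟩,⟨fd2a,fd2b,fd2c⟩,
    fs1,fs2,fs3,fs4,fnb⟩ := N
  have dc1 : d.R₁.A ≠ d.R₂.A := fun h => q2 (by rw [← xa1, ← xa2, h])
  have dc2 : d.R₁.A ≠ bhat n d.R₂ := fun h => q3 (by rw [← xa1, ← xb2, h])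
  have dc3 : bhat n d.R₁ ≠ d.R₂.A := fun h => q4 (by rw [← xb1, ← xa2, h])
  have dc4 : bhat n d.R₁ ≠ bhat n d.R₂ := fun h => q5 (by rw [← xb1, ← xb2, h])
  have dr1 : d.R₁.C ≠ d.R₂.C := fun h => q2 (congrArg (fun t : ℤ => ((t : ℤ) : ZMod n)) h)
  have dr2 : d.R₁.C ≠ dhat n d.R₂ := fun h => q3 (by
    have : ((d.R₁.C : ℤ) : ZMod n) = ((dhat n d.R₂ : ℤ) : ZMod n) :=
      congrArg (fun t : ℤ => ((t : ℤ) : ZMod n)) h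
    rwa [dhat_res n d.R₂ d.h₂.2.1] at this)
  have dr3 : dhat n d.R₁ ≠ d.R₂.C := fun h => q4 (by
    have : ((dhat n d.R₁ : ℤ) : ZMod n) = ((d.R₂.C : ℤ) : ZMod n) :=
      congrArg (fun t : ℤ => ((t : ℤ) : ZMod n)) h
    rwa [dhat_res n d.R₁ d.h₁.2.1] at this)
  have dr4 : dhat n d.R₁ ≠ dhat n d.R₂ := fun h => q5 (by
    have : ((dhat n d.R₁ : ℤ) : ZMod n) = ((dhat n d.R₂ : ℤ) : ZMod n) :=
      congrArg (fun t : ℤ => ((t : ℤ) : ZMod n)) h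
    rwa [dhat_res n d.R₁ d.h₁.2.1, dhat_res n d.R₂ d.h₂.2.1] at this)
  -- the two difference formulas
  have hw2 : ∀ i, d.y i
      = Equiv.swap ((d.R₁.C : ℤ) : ZMod n) ((dhat n d.R₁ : ℤ) : ZMod n) (x i) := by
    intro i
    rw [dhat_res n d.R₁ d.h₁.2.1]
    exact y_apply d i
  have hq2' : x ((bhat n d.R₁ : ℤ) : ZMod n) = ((dhat n d.R₁ : ℤ) : ZMod n) := by
    rw [dhat_res n d.R₁ d.h₁.2.1]; exact xb1
  have hcd1 : ((d.R₁.C : ℤ) : ZMod n) ≠ ((dhat n d.R₁ : ℤ) : ZMod n) := by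
    rw [dhat_res n d.R₁ d.h₁.2.1]; exact q1
  have hΔ2 := intCount_swap d.R₂ d.y x _ _ ((d.R₁.A : ℤ) : ZMod n)
    ((bhat n d.R₁ : ℤ) : ZMod n) hw2 xa1 hq2' hcd1
  have hw1 : ∀ i, (flipDecomp d h4).y i
      = Equiv.swap ((d.R₂.C : ℤ) : ZMod n) ((dhat n d.R₂ : ℤ) : ZMod n) (x i) := by
    intro i
    rw [dhat_res n d.R₂ d.h₂.2.1]
    rfl
  have hq1' : x ((bhat n d.R₂ : ℤ) : ZMod n) = ((dhat n d.R₂ : ℤ) : ZMod n) := by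
    rw [dhat_res n d.R₂ d.h₂.2.1]; exact xb2
  have hcd2 : ((d.R₂.C : ℤ) : ZMod n) ≠ ((dhat n d.R₂ : ℤ) : ZMod n) := by
    rw [dhat_res n d.R₂ d.h₂.2.1]; exact q6
  have hΔ1 := intCount_swap d.R₁ (flipDecomp d h4).y x _ _ ((d.R₂.A : ℤ) : ZMod n)
    ((bhat n d.R₂ : ℤ) : ZMod n) hw1 xa2 hq1' hcd2
  show d.R₁.T n x + d.R₂.T n d.y = d.R₂.T n x + d.R₁.T n (flipDecomp d h4).y
  by_cases hL1 : d.R₁.IsLong n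
  · by_cases hL2 : d.R₂.IsLong n
    · exact absurd ⟨hL1, hL2⟩ d.notboth
    -- R₁ long, R₂ ordinary : show intCount R₂ unchanged
    have hl2m2 : lb n d.R₂ = 0 ∧ mb n d.R₂ = 0 := by
      have hne : ¬(lb n d.R₂ + mb n d.R₂ = 1) :=
        fun h => hL2 ((isLong_iff n d.R₂ d.h₂.2.1).mpr h)
      clear * - hne fs3 fs4
      omega
    have hB2e : d.R₂.B = d.R₂.A + bw n d.R₂ := by clear * - hl2m2 fs3; omega
    have hD2e : d.R₂.D = d.R₂.C + bh n d.R₂ := by clear * - hl2m2 fs4; omega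
    have hB2le : d.R₂.B ≤ d.R₂.A + (n : ℤ) := by clear * - hB2e fw2n; omega
    have hD2le : d.R₂.D ≤ d.R₂.C + (n : ℤ) := by clear * - hD2e fh2n; omega
    rw [card_filter_Ioo n d.R₂.A d.R₂.B d.R₁.A f2a f2b hB2le f1a f1b,
        card_filter_Ioo n d.R₂.A d.R₂.B (bhat n d.R₁) f2a f2b hB2le fb1a fb1b,
        card_filter_Ioo n d.R₂.C d.R₂.D (dhat n d.R₁) f2c f2d hD2le fd1a fd1b,
        card_filter_Ioo n d.R₂.C d.R₂.D d.R₁.C f2c f2d hD2le f1c f1d] at hΔ2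
    have hT1 : d.R₁.T n x = 1 := by unfold CRect.T; exact if_pos hL1
    have hT1' : d.R₁.T n (flipDecomp d h4).y = 1 := by unfold CRect.T; exact if_pos hL1
    have hT2 : d.R₂.T n d.y = d.R₂.intCount n d.y := by unfold CRect.T; exact if_neg hL2
    have hT2' : d.R₂.T n x = d.R₂.intCount n x := by unfold CRect.T; exact if_neg hL2
    rw [hT1, hT1', hT2, hT2']
    have hsplit := (isLong_iff n d.R₁ d.h₁.2.1).mp hL1
    rcases fs1 with ⟨hl10, hBA1⟩ | ⟨hl11, hBA1, hbh11, hm10⟩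
    · -- m₁ = 1 : width-one long rectangle, adjacent columns
      have hbw11 : bw n d.R₁ = 1 := by clear * - fs2 hsplit hl10; omega
      have hadj : Ob n d.R₂.A d.R₂.B d.R₁.A = Ob n d.R₂.A d.R₂.B (bhat n d.R₁) :=
        Ob_adj (n : ℤ) d.R₂.A d.R₂.B (bhat n d.R₂) d.R₁.A (bhat n d.R₁) f2a f2b
          (by clear * - hB2e fw2; omega) (by clear * - hB2e fw2n; omega)
          (by clear * - fb2c hB2e; omega) fb2a fb2b f1a f1b fb1a fb1b
          (by clear * - fb1c hbw11; omega) dc1 dc4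
      have hfin : (d.R₂.intCount n d.y : ℤ) = d.R₂.intCount n x := by
        linear_combination hΔ2 +
          (Ob (n : ℤ) d.R₂.C d.R₂.D (dhat n d.R₁) - Ob (n : ℤ) d.R₂.C d.R₂.D d.R₁.C) * hadj
      omega
    · -- l₁ = 1 : height-one long rectangle, adjacent rows
      have hadjr : Ob n d.R₂.C d.R₂.D (dhat n d.R₁) = Ob n d.R₂.C d.R₂.D d.R₁.C :=
        (Ob_adj (n : ℤ) d.R₂.C d.R₂.D (dhat n d.R₂) d.R₁.C (dhat n d.R₁) f2c f2d
          (by clear * - hD2e fh2; omega) (by clear * - hD2e fh2n; omega)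
          (by clear * - fd2c hD2e; omega) fd2a fd2b f1c f1d fd1a fd1b
          (by clear * - fd1c hbh11; omega) dr1 dr4).symm
      have hfin : (d.R₂.intCount n d.y : ℤ) = d.R₂.intCount n x := by
        linear_combination hΔ2 +
          (Ob (n : ℤ) d.R₂.A d.R₂.B d.R₁.A - Ob (n : ℤ) d.R₂.A d.R₂.B (bhat n d.R₁)) * hadjr
      omega
  · by_cases hL2 : d.R₂.IsLong n
    · -- R₂ long, R₁ ordinary : show intCount R₁ unchanged
      have hl1m1 : lb n d.R₁ = 0 ∧ mb n d.R₁ = 0 := by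
        have hne : ¬(lb n d.R₁ + mb n d.R₁ = 1) :=
          fun h => hL1 ((isLong_iff n d.R₁ d.h₁.2.1).mpr h)
        clear * - hne fs1 fs2
        omega
      have hB1e : d.R₁.B = d.R₁.A + bw n d.R₁ := by clear * - hl1m1 fs1; omega
      have hD1e : d.R₁.D = d.R₁.C + bh n d.R₁ := by clear * - hl1m1 fs2; omega
      have hB1le : d.R₁.B ≤ d.R₁.A + (n : ℤ) := by clear * - hB1e fw1n; omega
      have hD1le : d.R₁.D ≤ d.R₁.C + (n : ℤ) := by clear * - hD1e fh1n; omega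
      rw [card_filter_Ioo n d.R₁.A d.R₁.B d.R₂.A f1a f1b hB1le f2a f2b,
          card_filter_Ioo n d.R₁.A d.R₁.B (bhat n d.R₂) f1a f1b hB1le fb2a fb2b,
          card_filter_Ioo n d.R₁.C d.R₁.D (dhat n d.R₂) f1c f1d hD1le fd2a fd2b,
          card_filter_Ioo n d.R₁.C d.R₁.D d.R₂.C f1c f1d hD1le f2c f2d] at hΔ1
      have hT1 : d.R₂.T n d.y = 1 := by unfold CRect.T; exact if_pos hL2
      have hT1' : d.R₂.T n x = 1 := by unfold CRect.T; exact if_pos hL2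
      have hT2 : d.R₁.T n x = d.R₁.intCount n x := by unfold CRect.T; exact if_neg hL1
      have hT2' : d.R₁.T n (flipDecomp d h4).y
          = d.R₁.intCount n (flipDecomp d h4).y := by unfold CRect.T; exact if_neg hL1
      rw [hT1, hT1', hT2, hT2']
      have hsplit := (isLong_iff n d.R₂ d.h₂.2.1).mp hL2
      rcases fs3 with ⟨hl20, hBA2⟩ | ⟨hl21, hBA2, hbh21, hm20⟩
      · -- m₂ = 1 : width-one long rectangle
        have hbw21 : bw n d.R₂ = 1 := by clear * - fs4 hsplit hl20; omega
        have hadj : Ob n d.R₁.A d.R₁.B d.R₂.A = Ob n d.R₁.A d.R₁.B (bhat n d.R₂) :=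
          Ob_adj (n : ℤ) d.R₁.A d.R₁.B (bhat n d.R₁) d.R₂.A (bhat n d.R₂) f1a f1b
            (by clear * - hB1e fw1; omega) (by clear * - hB1e fw1n; omega)
            (by clear * - fb1c hB1e; omega) fb1a fb1b f2a f2b fb2a fb2b
            (by clear * - fb2c hbw21; omega) (Ne.symm dc1) (Ne.symm dc4)
        have hfin : (d.R₁.intCount n (flipDecomp d h4).y : ℤ) = d.R₁.intCount n x := by
          linear_combination hΔ1 +
            (Ob (n : ℤ) d.R₁.C d.R₁.D (dhat n d.R₂) - Ob (n : ℤ) d.R₁.C d.R₁.D d.R₂.C) * hadj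
        omega
      · -- l₂ = 1 : height-one long rectangle
        have hadjr : Ob n d.R₁.C d.R₁.D (dhat n d.R₂) = Ob n d.R₁.C d.R₁.D d.R₂.C :=
          (Ob_adj (n : ℤ) d.R₁.C d.R₁.D (dhat n d.R₁) d.R₂.C (dhat n d.R₂) f1c f1d
            (by clear * - hD1e fh1; omega) (by clear * - hD1e fh1n; omega)
            (by clear * - fd1c hD1e; omega) fd1a fd1b f2c f2d fd2a fd2b
            (by clear * - fd2c hbh21; omega) (Ne.symm dr1) (Ne.symm dr4)).symm
        have hfin : (d.R₁.intCount n (flipDecomp d h4).y : ℤ) = d.R₁.intCount n x := by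
          linear_combination hΔ1 +
            (Ob (n : ℤ) d.R₁.A d.R₁.B d.R₂.A - Ob (n : ℤ) d.R₁.A d.R₁.B (bhat n d.R₂)) * hadjr
        omega
    · -- both ordinary : the linking argument
      have hl1m1 : lb n d.R₁ = 0 ∧ mb n d.R₁ = 0 := by
        have hne : ¬(lb n d.R₁ + mb n d.R₁ = 1) :=
          fun h => hL1 ((isLong_iff n d.R₁ d.h₁.2.1).mpr h)
        clear * - hne fs1 fs2
        omega
      have hl2m2 : lb n d.R₂ = 0 ∧ mb n d.R₂ = 0 := by
        have hne : ¬(lb n d.R₂ + mb n d.R₂ = 1) :=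
          fun h => hL2 ((isLong_iff n d.R₂ d.h₂.2.1).mpr h)
        clear * - hne fs3 fs4
        omega
      have hB1e : d.R₁.B = d.R₁.A + bw n d.R₁ := by clear * - hl1m1 fs1; omega
      have hD1e : d.R₁.D = d.R₁.C + bh n d.R₁ := by clear * - hl1m1 fs2; omega
      have hB2e : d.R₂.B = d.R₂.A + bw n d.R₂ := by clear * - hl2m2 fs3; omega
      have hD2e : d.R₂.D = d.R₂.C + bh n d.R₂ := by clear * - hl2m2 fs4; omega
      have hB1le : d.R₁.B ≤ d.R₁.A + (n : ℤ) := by clear * - hB1e fw1n; omega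
      have hD1le : d.R₁.D ≤ d.R₁.C + (n : ℤ) := by clear * - hD1e fh1n; omega
      have hB2le : d.R₂.B ≤ d.R₂.A + (n : ℤ) := by clear * - hB2e fw2n; omega
      have hD2le : d.R₂.D ≤ d.R₂.C + (n : ℤ) := by clear * - hD2e fh2n; omega
      rw [card_filter_Ioo n d.R₂.A d.R₂.B d.R₁.A f2a f2b hB2le f1a f1b,
          card_filter_Ioo n d.R₂.A d.R₂.B (bhat n d.R₁) f2a f2b hB2le fb1a fb1b,
          card_filter_Ioo n d.R₂.C d.R₂.D (dhat n d.R₁) f2c f2d hD2le fd1a fd1b,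
          card_filter_Ioo n d.R₂.C d.R₂.D d.R₁.C f2c f2d hD2le f1c f1d] at hΔ2
      rw [card_filter_Ioo n d.R₁.A d.R₁.B d.R₂.A f1a f1b hB1le f2a f2b,
          card_filter_Ioo n d.R₁.A d.R₁.B (bhat n d.R₂) f1a f1b hB1le fb2a fb2b,
          card_filter_Ioo n d.R₁.C d.R₁.D (dhat n d.R₂) f1c f1d hD1le fd2a fd2b,
          card_filter_Ioo n d.R₁.C d.R₁.D d.R₂.C f1c f1d hD1le f2c f2d] at hΔ1
      rw [hB2e, hD2e] at hΔ2
      rw [hB1e, hD1e] at hΔ1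
      have lcol := Ob_link (n : ℤ) d.R₁.A (bw n d.R₁) (bhat n d.R₁) d.R₂.A (bw n d.R₂)
        (bhat n d.R₂) f1a f1b fw1 fw1n fb1c fb1a fb1b f2a f2b fw2 fw2n fb2c fb2a fb2b
        dc1 dc2 dc3 dc4
      have lrow := Ob_link (n : ℤ) d.R₁.C (bh n d.R₁) (dhat n d.R₁) d.R₂.C (bh n d.R₂)
        (dhat n d.R₂) f1c f1d fh1 fh1n fd1c fd1a fd1b f2c f2d fh2 fh2n fd2c fd2a fd2b
        dr1 dr2 dr3 dr4
      have hprod :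
          (Ob (n:ℤ) d.R₂.A (d.R₂.A + bw n d.R₂) d.R₁.A
            - Ob (n:ℤ) d.R₂.A (d.R₂.A + bw n d.R₂) (bhat n d.R₁)) *
          (Ob (n:ℤ) d.R₂.C (d.R₂.C + bh n d.R₂) (dhat n d.R₁)
            - Ob (n:ℤ) d.R₂.C (d.R₂.C + bh n d.R₂) d.R₁.C)
          = (Ob (n:ℤ) d.R₁.A (d.R₁.A + bw n d.R₁) d.R₂.A
            - Ob (n:ℤ) d.R₁.A (d.R₁.A + bw n d.R₁) (bhat n d.R₂)) *
          (Ob (n:ℤ) d.R₁.C (d.R₁.C + bh n d.R₁) (dhat n d.R₂)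
            - Ob (n:ℤ) d.R₁.C (d.R₁.C + bh n d.R₁) d.R₂.C) := by
        linear_combination
          (Ob (n:ℤ) d.R₂.C (d.R₂.C + bh n d.R₂) (dhat n d.R₁)
            - Ob (n:ℤ) d.R₂.C (d.R₂.C + bh n d.R₂) d.R₁.C) * lcol
          + (Ob (n:ℤ) d.R₁.A (d.R₁.A + bw n d.R₁) d.R₂.A
            - Ob (n:ℤ) d.R₁.A (d.R₁.A + bw n d.R₁) (bhat n d.R₂)) * lrow
      have hfin : (d.R₂.intCount n d.y : ℤ) - d.R₂.intCount n x
          = (d.R₁.intCount n (flipDecomp d h4).y : ℤ) - d.R₁.intCount n x :=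
        hΔ2.trans (hprod.trans hΔ1.symm)
      have hT1 : d.R₁.T n x = d.R₁.intCount n x := by unfold CRect.T; exact if_neg hL1
      have hT2 : d.R₂.T n d.y = d.R₂.intCount n d.y := by unfold CRect.T; exact if_neg hL2
      have hT3 : d.R₂.T n x = d.R₂.intCount n x := by unfold CRect.T; exact if_neg hL2
      have hT4 : d.R₁.T n (flipDecomp d h4).y
          = d.R₁.intCount n (flipDecomp d h4).y := by unfold CRect.T; exact if_neg hL1
      rw [hT1, hT2, hT3, hT4]
      omega

end S6

/-- If `|x \ (x ∩ z)| = 4` and the domain `ψ ∈ π(x,z)` admits a decomposition into two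
rectangles, not both long, then `ψ` admits precisely two such decompositions, and the
two decompositions have the same degree. -/
theorem stmt6 (n : ℕ) [NeZero n] (x z : Equiv.Perm (ZMod n))
    (ψ : ZMod n × ZMod n → ℤ)
    (h4 : (Finset.univ.filter (fun i : ZMod n => x i ≠ z i)).card = 4)
    (d : Decomp n ψ x z) :
    ∃ d₁ d₂ : Decomp n ψ x z, d₁ ≠ d₂ ∧ (∀ e : Decomp n ψ x z, e = d₁ ∨ e = d₂) ∧
      d₁.deg = d₂.deg := by
  refine ⟨d, S6.flipDecomp d h4, S6.flip_ne d h4, ?_, S6.deg_flip d h4⟩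
  intro e
  have p1 := (S6.distinct4 e h4).1
  have hm := S6.moved_mem d e.c1 (by rw [(S6.sigma_vals e h4).1]; exact Ne.symm p1)
  rcases hm with h | h | h | h
  · exact Or.inl (S6.battle_same e d h4 h)
  · exact (S6.battle_flip e d h4 h).elim
  · exact Or.inr (S6.battle_same e (S6.flipDecomp d h4) h4 h)
  · exact (S6.battle_flip e (S6.flipDecomp d h4) h4 h).elim
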